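/- arXiv:cond-mat/0311149 — 8 statements merged into one kernel-verified Lean document; each statement's English description precedes it below -/
import Mathlib

section
/- The number of Dyck paths of length 2n with exactly p returns to the x-axis equals the Ballot number B_{n,p} = (p/n) * binomial(2n-p-1, n-1). -/
/-- Step weight: up-step = +1, down-step = -1. -/
def stepVal (b : Bool) : ℤ := if b then 1 else -1

/-- Height after the first `k` steps of the walk `l`. -/
def pathHeight (l : List Bool) (k : ℕ) : ℤ := ((l.take k).map stepVal).sum

/-- `l` is a Dyck path of length `2n`: from height 0 back to height 0, never below 0. -/
def IsDyckPath (n : ℕ) (l : List Bool) : Prop :=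
  l.length = 2 * n ∧ pathHeight l l.length = 0 ∧ ∀ k, 0 ≤ pathHeight l k

/-- Number of returns: down-steps ending on the x-axis. -/
def numReturns (l : List Bool) : ℕ :=
  (List.range l.length).countP
    (fun k => decide (l.getD k true = false ∧ pathHeight l (k + 1) = 0))

/-! ### Auxiliary development -/

def sumZ (l : List Bool) : ℤ := (l.map stepVal).sum

lemma pathHeight_of_le (l : List Bool) {k : ℕ} (h : l.length ≤ k) :
    pathHeight l k = sumZ l := by
  simp [pathHeight, sumZ, List.take_of_length_le h]

lemma pathHeight_length (l : List Bool) : pathHeight l l.length = sumZ l :=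
  pathHeight_of_le l le_rfl

lemma pathHeight_append (l : List Bool) (b : Bool) {k : ℕ} (h : k ≤ l.length) :
    pathHeight (l ++ [b]) k = pathHeight l k := by
  simp [pathHeight, List.take_append, Nat.sub_eq_zero_of_le h]

lemma pathHeight_append_last (l : List Bool) (b : Bool) :
    pathHeight (l ++ [b]) (l.length + 1) = sumZ l + stepVal b := by
  have : l.length + 1 = (l ++ [b]).length := by simp
  rw [this, pathHeight_length]
  simp [sumZ]

/-- decidable version of nonnegativity -/
def NN (l : List Bool) : Prop := ∀ k ∈ List.range (l.length + 1), 0 ≤ pathHeight l k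

instance : DecidablePred NN := fun l => by unfold NN; infer_instance

lemma NN_iff (l : List Bool) : NN l ↔ ∀ k, 0 ≤ pathHeight l k := by
  constructor
  · intro h k
    rcases le_or_gt k l.length with hk | hk
    · exact h k (by simp [List.mem_range]; omega)
    · rw [pathHeight_of_le l hk.le, ← pathHeight_length]
      exact h l.length (by simp)
  · intro h k _; exact h k

lemma sumZ_nonneg_of_NN {l : List Bool} (h : NN l) : 0 ≤ sumZ l := by
  rw [← pathHeight_length]; exact (NN_iff l).1 h _

lemma NN_append (l : List Bool) (b : Bool) :
    NN (l ++ [b]) ↔ NN l ∧ 0 ≤ sumZ l + stepVal b := by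
  rw [NN_iff, NN_iff]
  constructor
  · intro h
    refine ⟨fun k => ?_, ?_⟩
    · rcases le_or_gt k l.length with hk | hk
      · rw [← pathHeight_append l b hk]; exact h k
      · rw [pathHeight_of_le l hk.le]
        have := h l.length
        rwa [pathHeight_append l b le_rfl, pathHeight_length] at this
    · have := h (l.length + 1)
      rwa [pathHeight_append_last] at this
  · rintro ⟨h1, h2⟩ k
    rcases le_or_gt k l.length with hk | hk
    · rw [pathHeight_append l b hk]; exact h1 k
    · rw [pathHeight_of_le _ (by simp; omega)]
      simpa [sumZ] using h2

lemma numReturns_append (l : List Bool) (b : Bool) :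
    numReturns (l ++ [b]) =
      numReturns l + (if b = false ∧ sumZ l + stepVal b = 0 then 1 else 0) := by
  unfold numReturns
  have hlen : (l ++ [b]).length = l.length + 1 := by simp
  rw [hlen, List.range_succ, List.countP_append]
  congr 1
  · apply List.countP_congr
    intro k hk
    rw [List.mem_range] at hk
    have h1 : (l ++ [b]).getD k true = l.getD k true := List.getD_append _ _ _ _ hk
    have h2 : pathHeight (l ++ [b]) (k + 1) = pathHeight l (k + 1) :=
      pathHeight_append l b (by omega)
    simp only [h1, h2]
  · have h1 : (l ++ [b]).getD l.length true = b := by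
      rw [List.getD_append_right _ _ _ _ le_rfl]; simp
    have h2 : pathHeight (l ++ [b]) (l.length + 1) = sumZ l + stepVal b :=
      pathHeight_append_last l b
    simp only [List.countP, List.countP.go, h1, h2]
    by_cases hb : b = false <;> by_cases hs : sumZ l + stepVal b = 0 <;>
      simp [hb, hs]

lemma sumZ_eq_counts (l : List Bool) :
    sumZ l = (l.count true : ℤ) - (l.count false : ℤ) := by
  induction l with
  | nil => simp [sumZ]
  | cons a t ih =>
    cases a <;> simp [sumZ, stepVal, List.count_cons] at * <;> omega

lemma count_add_count (l : List Bool) : l.count true + l.count false = l.length := by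
  induction l with
  | nil => simp
  | cons a t ih => cases a <;> simp [List.count_cons] <;> omega

lemma numReturns_le (l : List Bool) : numReturns l ≤ l.count false := by
  induction l using List.reverseRecOn with
  | nil => simp [numReturns]
  | append_singleton t b ih =>
    rw [numReturns_append]
    cases b
    · simp only [List.count_append]
      have : (List.count false [false]) = 1 := by simp
      rw [this]
      split <;> omega
    · simpa using ih

/-! ### The finset of all boolean lists of a given length -/

def allB : ℕ → Finset (List Bool)
  | 0 => {[]}
  | (m + 1) => ((allB m).image (fun l => l ++ [true])) ∪ ((allB m).image (fun l => l ++ [false]))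

lemma mem_allB {m : ℕ} {l : List Bool} : l ∈ allB m ↔ l.length = m := by
  induction m generalizing l with
  | zero => simp [allB, List.length_eq_zero_iff]
  | succ m ih =>
    simp only [allB, Finset.mem_union, Finset.mem_image]
    constructor
    · rintro (⟨a, ha, rfl⟩ | ⟨a, ha, rfl⟩) <;> simp [ih.1 ha]
    · intro hl
      have hne : l ≠ [] := by intro h; simp [h] at hl
      have : l.dropLast ++ [l.getLast hne] = l := List.dropLast_append_getLast hne
      have hd : l.dropLast ∈ allB m := ih.2 (by simp [List.length_dropLast, hl])
      cases hb : l.getLast hne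
      · right; exact ⟨l.dropLast, hd, by rw [← hb, this]⟩
      · left; exact ⟨l.dropLast, hd, by rw [← hb, this]⟩

def okP (u d p : ℕ) (l : List Bool) : Prop :=
  l.count true = u ∧ l.count false = d ∧ NN l ∧ numReturns l = p

instance (u d p : ℕ) : DecidablePred (okP u d p) := fun l => by
  unfold okP; infer_instance

def g (u d p : ℕ) : ℕ := ((allB (u + d)).filter (okP u d p)).card

lemma g_zero_of_lt {u d p : ℕ} (h : d < p) : g u d p = 0 := by
  rw [g, Finset.card_eq_zero, Finset.filter_eq_empty_iff]
  rintro l - ⟨-, h2, -, h4⟩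
  have := numReturns_le l
  omega

lemma card_filter_succ (m : ℕ) (P : List Bool → Prop) [DecidablePred P] :
    ((allB (m + 1)).filter P).card =
      ((allB m).filter (fun l => P (l ++ [true]))).card +
      ((allB m).filter (fun l => P (l ++ [false]))).card := by
  have hinj : ∀ b : Bool, Function.Injective (fun l : List Bool => l ++ [b]) :=
    fun b => List.append_left_injective [b]
  have hdisj : Disjoint ((allB m).image (fun l => l ++ [true]))
      ((allB m).image (fun l => l ++ [false])) := by
    rw [Finset.disjoint_left]
    rintro a ha hb
    simp only [Finset.mem_image] at ha hb
    obtain ⟨x, -, hx⟩ := ha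
    obtain ⟨y, -, hy⟩ := hb
    have : (x ++ [true]).getLast? = (y ++ [false]).getLast? := by rw [hx, hy]
    simp [List.getLast?_append] at this
  rw [show allB (m+1) = _ ∪ _ from rfl, Finset.filter_union,
    Finset.card_union_of_disjoint (Finset.disjoint_filter_filter hdisj),
    Finset.filter_image, Finset.filter_image,
    Finset.card_image_of_injective _ (hinj true),
    Finset.card_image_of_injective _ (hinj false)]

lemma okP_append_true (u d p : ℕ) (l : List Bool) :
    okP (u + 1) d p (l ++ [true]) ↔ okP u d p l := by
  have e1 : (l ++ [true]).count true = l.count true + 1 := by simp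
  have e2 : (l ++ [true]).count false = l.count false := by simp
  have e3 : numReturns (l ++ [true]) = numReturns l := by
    rw [numReturns_append]; simp
  unfold okP
  rw [NN_append, e1, e2, e3]
  constructor
  · rintro ⟨h1, h2, ⟨h3, h4⟩, h5⟩
    exact ⟨by omega, h2, h3, h5⟩
  · rintro ⟨h1, h2, h3, h4⟩
    have hs : 0 ≤ sumZ l := sumZ_nonneg_of_NN h3
    exact ⟨by omega, h2, ⟨h3, by simp [stepVal]; omega⟩, h4⟩

lemma okP_append_false (u d p : ℕ) (l : List Bool) :
    okP u (d + 1) p (l ++ [false]) ↔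
      l.count true = u ∧ l.count false = d ∧ NN l ∧ d + 1 ≤ u ∧
        numReturns l + (if u = d + 1 then 1 else 0) = p := by
  have e1 : (l ++ [false]).count true = l.count true := by simp
  have e2 : (l ++ [false]).count false = l.count false + 1 := by simp
  have e3 : numReturns (l ++ [false]) =
      numReturns l + (if sumZ l + stepVal false = 0 then 1 else 0) := by
    rw [numReturns_append]; simp
  have hstep : stepVal false = -1 := rfl
  have e4 : (if (u : ℤ) - (d : ℤ) + -1 = 0 then (1 : ℕ) else 0) =
      (if u = d + 1 then 1 else 0) := by split_ifs <;> omega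
  unfold okP
  rw [NN_append, e1, e2, e3, hstep]
  constructor
  · rintro ⟨h1, h2, ⟨h3, h4⟩, h5⟩
    have hd : l.count false = d := by omega
    have hsum : sumZ l = (u : ℤ) - (d : ℤ) := by rw [sumZ_eq_counts, h1, hd]
    rw [hsum] at h4 h5
    rw [e4] at h5
    exact ⟨h1, hd, h3, by omega, h5⟩
  · rintro ⟨h1, h2, h3, h4, h5⟩
    have hsum : sumZ l = (u : ℤ) - (d : ℤ) := by rw [sumZ_eq_counts, h1, h2]
    rw [← e4] at h5
    refine ⟨h1, by omega, ⟨h3, by rw [hsum]; omega⟩, by rw [hsum]; exact h5⟩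

lemma g_zero_of_ud {u d p : ℕ} (h : u < d) : g u d p = 0 := by
  rw [g, Finset.card_eq_zero, Finset.filter_eq_empty_iff]
  rintro l - ⟨h1, h2, h3, -⟩
  have hs : 0 ≤ sumZ l := sumZ_nonneg_of_NN h3
  rw [sumZ_eq_counts, h1, h2] at hs
  omega

lemma getD_true_of_notMem {l : List Bool} (h : false ∉ l) (k : ℕ) :
    l.getD k true = true := by
  rcases lt_or_ge k l.length with hk | hk
  · rw [List.getD_eq_getElem l true hk]
    cases hv : l[k]
    · exact absurd (hv ▸ List.getElem_mem hk) h
    · rfl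
  · exact List.getD_eq_default l true hk

lemma okP_replicate (u : ℕ) : okP u 0 0 (List.replicate u true) := by
  have hmem : false ∉ List.replicate u true := by
    intro h
    simp [List.mem_replicate] at h
  refine ⟨by simp, List.count_eq_zero.2 hmem, ?_, ?_⟩
  · intro k _
    simp only [pathHeight, List.take_replicate, List.map_replicate, List.sum_replicate,
      smul_eq_mul, mul_one, stepVal, if_true]
    positivity
  · rw [numReturns, List.countP_eq_zero]
    intro k _
    simp [getD_true_of_notMem hmem k]

lemma g_d_zero (u p : ℕ) : g u 0 p = if p = 0 then 1 else 0 := by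
  rw [g]
  split
  · next hp =>
    subst hp
    rw [Finset.card_eq_one]
    refine ⟨List.replicate u true, ?_⟩
    ext l
    simp only [Finset.mem_filter, mem_allB, Finset.mem_singleton]
    constructor
    · rintro ⟨hlen, h1, h2, -, -⟩
      refine List.eq_replicate_iff.2 ⟨by simpa using hlen, ?_⟩
      intro b hb
      cases b
      · exact absurd (List.count_eq_zero.1 h2) (by simp [hb])
      · rfl
    · rintro rfl
      exact ⟨by simp, okP_replicate u⟩
  · next hp =>
    rw [Finset.card_eq_zero, Finset.filter_eq_empty_iff]
    rintro l - ⟨-, h2, -, h4⟩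
    have := numReturns_le l
    omega

lemma g_succ (v e p : ℕ) :
    g (v + 1) (e + 1) p =
      g v (e + 1) p +
      ((allB (v + 1 + e)).filter (fun l => okP (v + 1) (e + 1) p (l ++ [false]))).card := by
  have h1 : v + 1 + (e + 1) = (v + 1 + e) + 1 := by ring
  rw [g, h1, card_filter_succ]
  congr 1
  rw [g, show v + (e + 1) = v + 1 + e by ring]
  exact congrArg Finset.card
    (Finset.filter_congr (fun l _ => okP_append_true v (e + 1) p l))

lemma false_part_of_lt (u e p : ℕ) (h : e + 1 < u) :
    ((allB (u + e)).filter (fun l => okP u (e + 1) p (l ++ [false]))).card = g u e p := by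
  rw [g]
  apply congrArg Finset.card
  apply Finset.filter_congr
  intro l _
  rw [okP_append_false]
  unfold okP
  rw [if_neg (by omega : ¬ u = e + 1)]
  constructor
  · rintro ⟨h1, h2, h3, -, h5⟩; exact ⟨h1, h2, h3, by omega⟩
  · rintro ⟨h1, h2, h3, h4⟩; exact ⟨h1, h2, h3, by omega, by omega⟩

lemma false_part_of_eq (e p : ℕ) :
    ((allB (e + 1 + e)).filter
        (fun l => okP (e + 1) (e + 1) (p + 1) (l ++ [false]))).card = g (e + 1) e p := by
  rw [g]
  apply congrArg Finset.card
  apply Finset.filter_congr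
  intro l _
  rw [okP_append_false]
  unfold okP
  rw [if_pos (rfl : e + 1 = e + 1)]
  constructor
  · rintro ⟨h1, h2, h3, -, h5⟩; exact ⟨h1, h2, h3, by omega⟩
  · rintro ⟨h1, h2, h3, h4⟩; exact ⟨h1, h2, h3, by omega, by omega⟩

lemma false_part_of_eq_zero (e : ℕ) :
    ((allB (e + 1 + e)).filter
        (fun l => okP (e + 1) (e + 1) 0 (l ++ [false]))).card = 0 := by
  rw [Finset.card_eq_zero, Finset.filter_eq_empty_iff]
  intro l _
  rw [okP_append_false]
  rintro ⟨-, -, -, -, h5⟩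
  rw [if_pos (rfl : e + 1 = e + 1)] at h5
  omega

lemma main (m : ℕ) : ∀ v p c, v + 1 + (p + c) = m → p + c ≤ v + 1 →
    g (v + 1) (p + c) p + (v + c).choose (v + 1) = (v + c).choose v := by
  induction m using Nat.strong_induction_on with
  | _ m IH =>
    intro v p c hm hdu
    rcases Nat.eq_zero_or_pos (p + c) with hd | hd
    · obtain ⟨rfl, rfl⟩ : p = 0 ∧ c = 0 := by omega
      rw [show (0 : ℕ) + 0 = 0 from rfl, g_d_zero, if_pos rfl, Nat.add_zero,
        Nat.choose_eq_zero_of_lt (by omega), Nat.choose_self]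
    · rcases eq_or_lt_of_le hdu with heq | hlt
      · -- p + c = v + 1
        rcases Nat.eq_zero_or_pos p with hp | hp
        · -- p = 0, c = v + 1
          subst hp
          obtain rfl : c = v + 1 := by omega
          rw [Nat.zero_add, g_succ v v 0, g_zero_of_ud (by omega : v < v + 1),
            false_part_of_eq_zero v]
          have hsym := Nat.choose_symm (show v + 1 ≤ v + (v + 1) by omega)
          rw [show v + (v + 1) - (v + 1) = v by omega] at hsym
          omega
        · obtain ⟨q, rfl⟩ : ∃ q, p = q + 1 := ⟨p - 1, by omega⟩
          rw [show q + 1 + c = v + 1 by omega, g_succ v v (q + 1),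
            g_zero_of_ud (by omega : v < v + 1), false_part_of_eq v q]
          have ih := IH (v + 1 + (q + c)) (by omega) v q c rfl (by omega)
          rw [show q + c = v by omega] at ih
          omega
      · -- p + c < v + 1
        obtain ⟨w, rfl⟩ : ∃ w, v = w + 1 := ⟨v - 1, by omega⟩
        rcases Nat.eq_zero_or_pos c with hc | hc
        · -- c = 0, p ≥ 1
          subst hc
          obtain ⟨q, rfl⟩ : ∃ q, p = q + 1 := ⟨p - 1, by omega⟩
          simp only [Nat.add_zero]
          rw [g_succ (w + 1) q (q + 1),
            false_part_of_lt (w + 1 + 1) q (q + 1) (by omega),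
            g_zero_of_lt (by omega : q < q + 1)]
          have ih := IH (w + 1 + (q + 1 + 0)) (by omega) w (q + 1) 0 rfl (by omega)
          simp only [Nat.add_zero] at ih
          have h0 : w.choose (w + 1) = 0 := Nat.choose_eq_zero_of_lt (by omega)
          have h1 : w.choose w = 1 := Nat.choose_self w
          have h2 : (w + 1).choose (w + 1 + 1) = 0 := Nat.choose_eq_zero_of_lt (by omega)
          have h3 : (w + 1).choose (w + 1) = 1 := Nat.choose_self _
          omega
        · -- c = c' + 1
          obtain ⟨c', rfl⟩ : ∃ c', c = c' + 1 := ⟨c - 1, by omega⟩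
          rw [show p + (c' + 1) = p + c' + 1 by omega, g_succ (w + 1) (p + c') p,
            false_part_of_lt (w + 1 + 1) (p + c') p (by omega)]
          have ih1 := IH (w + 1 + (p + (c' + 1))) (by omega) w p (c' + 1) rfl (by omega)
          have ih2 := IH (w + 1 + 1 + (p + c')) (by omega) (w + 1) p c' rfl (by omega)
          rw [show p + (c' + 1) = p + c' + 1 by omega,
            show w + (c' + 1) = w + c' + 1 by omega] at ih1
          rw [show w + 1 + c' = w + c' + 1 by omega] at ih2
          rw [show w + 1 + (c' + 1) = w + c' + 1 + 1 by omega]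
          have p1 : (w + c' + 1 + 1).choose (w + 1 + 1) =
              (w + c' + 1).choose (w + 1) + (w + c' + 1).choose (w + 1 + 1) :=
            Nat.choose_succ_succ' _ _
          have p2 : (w + c' + 1 + 1).choose (w + 1) =
              (w + c' + 1).choose w + (w + c' + 1).choose (w + 1) :=
            Nat.choose_succ_succ' _ _
          omega

theorem count_eq_g (n p : ℕ) :
    Nat.card {l : List Bool // IsDyckPath n l ∧ numReturns l = p} = g n n p := by
  have equiv : {l : List Bool // IsDyckPath n l ∧ numReturns l = p} ≃
      {l // l ∈ (allB (n + n)).filter (okP n n p)} := by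
    apply Equiv.subtypeEquivRight
    intro l
    rw [Finset.mem_filter, mem_allB]
    unfold IsDyckPath okP
    constructor
    · rintro ⟨⟨hlen, hend, hnn⟩, hret⟩
      rw [pathHeight_length, sumZ_eq_counts] at hend
      have hcc := count_add_count l
      refine ⟨by omega, by omega, by omega, (NN_iff l).2 hnn, hret⟩
    · rintro ⟨hlen, h1, h2, h3, h4⟩
      have hcc := count_add_count l
      refine ⟨⟨by omega, ?_, (NN_iff l).1 h3⟩, h4⟩
      rw [pathHeight_length, sumZ_eq_counts, h1, h2]
      ring
  rw [Nat.card_congr equiv, Nat.card_eq_finsetCard, g]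

/-- The number of Dyck paths of length 2n with exactly p returns equals the Ballot
number B_{n,p} = p (2n-p-1)! / (n! (n-p)!). -/
theorem dyck_paths_with_p_returns (n p : ℕ) (hp : 1 ≤ p) (hpn : p ≤ n) :
    Nat.card {l : List Bool // IsDyckPath n l ∧ numReturns l = p} *
      (n.factorial * (n - p).factorial) = p * (2 * n - p - 1).factorial := by
  obtain ⟨v, rfl⟩ : ∃ v, n = v + 1 := ⟨n - 1, by omega⟩
  obtain ⟨c, hc⟩ : ∃ c, p + c = v + 1 := ⟨v + 1 - p, by omega⟩
  rw [count_eq_g]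
  have hmain := main (v + 1 + (p + c)) v p c rfl (by omega)
  rw [hc] at hmain
  rw [show v + 1 - p = c by omega, show 2 * (v + 1) - p - 1 = v + c by omega]
  have hAf : (v + c).choose v * v.factorial * c.factorial = (v + c).factorial := by
    have := Nat.choose_mul_factorial_mul_factorial (show v ≤ v + c by omega)
    rwa [show v + c - v = c by omega] at this
  have hA2 : (v + c).choose v * ((v + 1).factorial * c.factorial) =
      (v + 1) * (v + c).factorial := by
    rw [Nat.factorial_succ]
    calc (v + c).choose v * ((v + 1) * v.factorial * c.factorial)
        = (v + 1) * ((v + c).choose v * v.factorial * c.factorial) := by ring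
      _ = (v + 1) * (v + c).factorial := by rw [hAf]
  have hB2 : (v + c).choose (v + 1) * ((v + 1).factorial * c.factorial) =
      c * (v + c).factorial := by
    rcases Nat.eq_zero_or_pos c with rfl | hcpos
    · have h0 : (v + 0).choose (v + 1) = 0 := Nat.choose_eq_zero_of_lt (by omega)
      simp [h0]
    · obtain ⟨c', rfl⟩ : ∃ c', c = c' + 1 := ⟨c - 1, by omega⟩
      have h := Nat.choose_mul_factorial_mul_factorial
        (show v + 1 ≤ v + (c' + 1) by omega)
      rw [show v + (c' + 1) - (v + 1) = c' by omega] at h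
      calc (v + (c' + 1)).choose (v + 1) * ((v + 1).factorial * (c' + 1).factorial)
          = (c' + 1) * ((v + (c' + 1)).choose (v + 1) * (v + 1).factorial
              * c'.factorial) := by rw [Nat.factorial_succ c']; ring
        _ = (c' + 1) * (v + (c' + 1)).factorial := by rw [h]
  have hgK : g (v + 1) (v + 1) p * ((v + 1).factorial * c.factorial) +
      (v + c).choose (v + 1) * ((v + 1).factorial * c.factorial) =
      (v + c).choose v * ((v + 1).factorial * c.factorial) := by
    rw [← add_mul, hmain]
  have h6 : (v + 1) * (v + c).factorial =
      p * (v + c).factorial + c * (v + c).factorial := by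
    rw [← add_mul]
    congr 1
    omega
  omega
end

section
/- The sum over p from 1 to n of the Ballot numbers B_{n,p} = (p/n) * binomial(2n-p-1, n-1) equals the Catalan number C_n = binomial(2n,n)/(n+1). -/
lemma key (q s : ℕ) :
    ((s : ℚ) + 1) * (2 * q + s).factorial / (((q + s + 1).factorial : ℚ) * q.factorial)
      = ((2 * q + s).choose (q + s) : ℚ) - (2 * q + s).choose (q + s + 1) := by
  have hf : ∀ m : ℕ, (m.factorial : ℚ) ≠ 0 := fun m => by
    exact_mod_cast (Nat.factorial_pos m).ne'
  rcases q with _ | r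
  · simp only [Nat.zero_add, Nat.add_zero, Nat.mul_zero, Nat.zero_mul, zero_add,
      Nat.choose_self, Nat.choose_succ_self, Nat.factorial_succ, Nat.factorial_zero]
    push_cast
    rw [sub_zero]
    field_simp
  · rw [show 2 * (r + 1) + s = 2 * r + s + 2 from by ring,
      show r + 1 + s = r + s + 1 from by ring]
    have h1 : r + s + 1 ≤ 2 * r + s + 2 := by omega
    have h2 : r + s + 1 + 1 ≤ 2 * r + s + 2 := by omega
    rw [Nat.cast_choose ℚ h1, Nat.cast_choose ℚ h2,
      show 2 * r + s + 2 - (r + s + 1) = r + 1 from by omega,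
      show 2 * r + s + 2 - (r + s + 1 + 1) = r from by omega,
      Nat.factorial_succ (r + s + 1), Nat.factorial_succ r]
    push_cast
    field_simp
    ring

/-- Endpoint: C(2n-1, n) - C(2n-1, n+1) = C(2n, n)/(n+1) for n ≥ 1. -/
lemma endpoint (n : ℕ) (hn : 1 ≤ n) :
    ((2 * n - 1).choose n : ℚ) - (2 * n - 1).choose (n + 1)
      = (Nat.choose (2 * n) n : ℚ) / (n + 1) := by
  obtain ⟨m, rfl⟩ := Nat.exists_eq_add_of_le hn
  rcases m with _ | r
  · norm_num
  · rw [show 2 * (1 + (r + 1)) - 1 = 2 * r + 3 from by omega,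
      show 1 + (r + 1) = r + 2 from by ring,
      show 2 * (r + 2) = 2 * r + 4 from by ring]
    have h1 : r + 2 ≤ 2 * r + 3 := by omega
    have h2 : r + 2 + 1 ≤ 2 * r + 3 := by omega
    have h3 : r + 2 ≤ 2 * r + 4 := by omega
    rw [Nat.cast_choose ℚ h1, show r + 2 + 1 = r + 3 from rfl, Nat.cast_choose ℚ (show r + 3 ≤ 2 * r + 3 from by omega), Nat.cast_choose ℚ h3,
      show 2 * r + 3 - (r + 2) = r + 1 from by omega,
      show 2 * r + 3 - (r + 3) = r from by omega,
      show 2 * r + 4 - (r + 2) = r + 2 from by omega]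
    have hf : ∀ m : ℕ, (m.factorial : ℚ) ≠ 0 := fun m => by
      exact_mod_cast (Nat.factorial_pos m).ne'
    rw [show (2 * r + 4) = (2 * r + 3) + 1 from rfl, Nat.factorial_succ (2 * r + 3),
      show r + 3 = (r + 2) + 1 from rfl, Nat.factorial_succ (r + 2),
      show r + 2 = (r + 1) + 1 from rfl, Nat.factorial_succ (r + 1),
      Nat.factorial_succ r]
    push_cast
    have : ((r : ℚ) + 1) + 1 ≠ 0 := by positivity
    field_simp
    ring

/-- Ballot number B_{n,p} = p (2n-p-1)! / (n! (n-p)!) as a rational. -/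
noncomputable def ballot (n p : ℕ) : ℚ :=
  (p : ℚ) * (2 * n - p - 1).factorial / ((n.factorial : ℚ) * (n - p).factorial)

noncomputable def G (n p : ℕ) : ℚ :=
  ((2 * n - p).choose n : ℚ) - (2 * n - p).choose (n + 1)

lemma ballot_telescope (n p : ℕ) (hp : 1 ≤ p) (hpn : p ≤ n) :
    ballot n p = G n p - G n (p + 1) := by
  obtain ⟨s, rfl⟩ : ∃ s, p = s + 1 := ⟨p - 1, by omega⟩
  obtain ⟨q, rfl⟩ : ∃ q, n = q + s + 1 := ⟨n - s - 1, by omega⟩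
  unfold ballot G
  rw [show 2 * (q + s + 1) - (s + 1) - 1 = 2 * q + s from by omega,
    show q + s + 1 - (s + 1) = q from by omega,
    show 2 * (q + s + 1) - (s + 1) = 2 * q + s + 1 from by omega,
    show 2 * (q + s + 1) - (s + 1 + 1) = 2 * q + s from by omega,
    show (2 * q + s + 1).choose (q + s + 1) = (2*q+s).choose (q+s) + (2*q+s).choose (q+s+1) from
      Nat.choose_succ_succ' (2 * q + s) (q + s),
    show q + s + 1 + 1 = q + s + 2 from rfl,
    show (2 * q + s + 1).choose (q + s + 2) = (2*q+s).choose (q+s+1) + (2*q+s).choose (q+s+2) from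
      Nat.choose_succ_succ' (2 * q + s) (q + s + 1)]
  have hk := key q s
  push_cast at hk ⊢
  linarith [hk]

/-- The sum over p from 1 to n of the Ballot numbers equals the Catalan number
C_n = binomial(2n,n)/(n+1). -/
theorem sum_ballot_eq_catalan (n : ℕ) (hn : 1 ≤ n) :
    ∑ p ∈ Finset.Icc 1 n, ballot n p = (Nat.choose (2 * n) n : ℚ) / (n + 1) := by
  have h1 : ∑ p ∈ Finset.Icc 1 n, ballot n p
      = ∑ i ∈ Finset.range n, (G n (i + 1) - G n (i + 1 + 1)) := by
    rw [show Finset.Icc 1 n = Finset.Ico 1 (n + 1) from rfl,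
      Finset.sum_Ico_eq_sum_range]
    simp only [show n + 1 - 1 = n from rfl]
    apply Finset.sum_congr rfl
    intro i hi
    rw [Finset.mem_range] at hi
    rw [show 1 + i = i + 1 from by ring]
    exact ballot_telescope n (i + 1) (by omega) (by omega)
  rw [h1, Finset.sum_range_sub' (fun i => G n (i + 1)) n]
  have hG0 : G n (n + 1) = 0 := by
    unfold G
    rw [Nat.choose_eq_zero_of_lt (by omega), Nat.choose_eq_zero_of_lt (by omega)]
    simp
  rw [hG0, sub_zero]
  unfold G
  exact endpoint n hn
end

section
/- Let H be a real n×n matrix whose columns each sum to zero. Then the vector v with components v_b = X(b,b) = det H(b,b) (the principal cofactors) satisfies H v = 0. -/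
open Matrix

lemma det_eq_zero_of_col_sums (n : ℕ) (H : Matrix (Fin (n + 1)) (Fin (n + 1)) ℝ)
    (hcol : ∀ b, ∑ a, H a b = 0) : H.det = 0 := by
  rw [← Matrix.exists_vecMul_eq_zero_iff]
  refine ⟨fun _ => 1, ?_, ?_⟩
  · intro h
    have := congrFun h 0
    simp at this
  · funext b
    simpa [Matrix.vecMul, dotProduct] using hcol b

lemma adjugate_row_const (n : ℕ) (H : Matrix (Fin (n + 1)) (Fin (n + 1)) ℝ)
    (hcol : ∀ b, ∑ a, H a b = 0) (a b : Fin (n + 1)) :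
    H.adjugate b a = H.adjugate b b := by
  rcases eq_or_ne a b with rfl | hab
  · rfl
  rw [Matrix.adjugate_apply, Matrix.adjugate_apply]
  set M := H.updateRow a (Pi.single b 1) with hM
  have hMk : ∀ k, k ≠ a → M k = H k := fun k hk => Matrix.updateRow_ne hk
  have hsum : (∑ k, (if k = a then (0:ℝ) else -1) • M k) = H a := by
    funext x
    rw [Finset.sum_apply]
    have : ∀ k, (if k = a then (0:ℝ) else -1) * M k x
        = ((if k = a then (1:ℝ) else 0) - 1) * H k x := by
      intro k
      rcases eq_or_ne k a with rfl | hk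
      · norm_num
      · simp [hMk k hk, hk]
    simp only [Pi.smul_apply, smul_eq_mul, this, sub_mul, one_mul, Finset.sum_sub_distrib, Finset.sum_ite_eq',
      Finset.mem_univ, if_true, hcol x, sub_zero]
    simp
  have h2 : (M.updateRow b (H a)).det
      = (if b = a then (0:ℝ) else -1) • M.det := by
    rw [← hsum, Matrix.det_updateRow_sum]
  rw [if_neg hab.symm] at h2
  have h3 : H.updateRow b (Pi.single b 1)
      = (M.updateRow b (H a)).submatrix (Equiv.swap a b) id := by
    ext i j
    rcases eq_or_ne i a with rfl | hia
    · simp [Matrix.updateRow_apply, hab, Equiv.swap_apply_left, hab.symm]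
    rcases eq_or_ne i b with rfl | hib
    · simp [Matrix.updateRow_apply, hab, hab.symm, Equiv.swap_apply_right, hM]
    · simp [Matrix.updateRow_apply, hia, hib, Equiv.swap_apply_of_ne_of_ne hia hib, hM]
  rw [h3, Matrix.det_permute, Equiv.Perm.sign_swap hab, h2]
  simp

/-- For a square real matrix whose columns sum to zero, the vector of principal
cofactors v_b = det H(b,b) is a right null vector: H v = 0. -/
theorem principal_cofactors_null_vector (n : ℕ)
    (H : Matrix (Fin (n + 1)) (Fin (n + 1)) ℝ) (hcol : ∀ b, ∑ a, H a b = 0) :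
    H.mulVec (fun b => (H.submatrix b.succAbove b.succAbove).det) = 0 := by
  have hv : ∀ b : Fin (n + 1), (H.submatrix b.succAbove b.succAbove).det = H.adjugate b b := by
    intro b
    rw [Matrix.adjugate_fin_succ_eq_det_submatrix]
    rw [show ((b : ℕ) + b) = 2 * b by ring, pow_mul]
    norm_num
  funext a
  have key : (H.mulVec fun b => (H.submatrix b.succAbove b.succAbove).det) a
      = (H * H.adjugate) a a := by
    simp only [Matrix.mulVec, Matrix.mul_apply, dotProduct]
    exact Finset.sum_congr rfl fun b _ => by
      rw [hv b, adjugate_row_const n H hcol a b]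
  rw [key, Matrix.mul_adjugate, det_eq_zero_of_col_sums n H hcol]
  simp
end

section
/- Let H be the generator of a Markov chain, i.e. H_{ab} = -r_{ab} for a ≠ b with r_{ab} ≥ 0 and columns summing to zero. Then each principal cofactor X(b,b) = det H(b,b) is a polynomial in the rates r_{ac} with coefficients in {0,1}; in particular X(b,b) ≥ 0. -/
open Matrix Finset

namespace PCPC

variable {N : ℕ}

/-- One step of the partial function `g`, on `Option`. -/
def step (g : Fin N → Option (Fin N)) : Option (Fin N) → Option (Fin N) := fun o => o.bind g

lemma step_none (g : Fin N → Option (Fin N)) (k : ℕ) : (step g)^[k] none = none := by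
  induction k with
  | zero => rfl
  | succ k ih => rw [Function.iterate_succ_apply]; simpa [step] using ih

lemma step_isSome (g : Fin N → Option (Fin N)) {o : Option (Fin N)} {k l : ℕ} (h : l ≤ k)
    (hk : ((step g)^[k] o).isSome) : ((step g)^[l] o).isSome := by
  by_contra hl
  rw [Option.not_isSome_iff_eq_none] at hl
  have : (step g)^[k] o = none := by
    have : (step g)^[(k - l) + l] o = (step g)^[k - l] ((step g)^[l] o) :=
      Function.iterate_add_apply _ _ _ _
    rw [Nat.sub_add_cancel h] at this
    rw [this, hl, step_none]
  rw [this] at hk; simp at hk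

/-- The 0/1 matrix of `g`, with a `1` in position `(i, j)` iff `g i = some j`. -/
def nmat (g : Fin N → Option (Fin N)) : Matrix (Fin N) (Fin N) ℤ :=
  Matrix.of fun i j => if g i = some j then 1 else 0

lemma nmat_pow (g : Fin N → Option (Fin N)) (k : ℕ) (i j : Fin N) :
    (nmat g ^ k) i j = if (step g)^[k] (some i) = some j then 1 else 0 := by
  induction k generalizing j with
  | zero =>
    simp only [pow_zero, Function.iterate_zero, id_eq, Option.some_inj, Matrix.one_apply]
  | succ k ih =>
    rw [pow_succ, Matrix.mul_apply]
    rcases h : (step g)^[k] (some i) with _ | l₀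
    · have : ∀ l, (nmat g ^ k) i l = 0 := by intro l; rw [ih, h]; simp
      simp only [this, zero_mul, Finset.sum_const_zero, Function.iterate_succ_apply', h]
      simp [step]
    · have : ∀ l, (nmat g ^ k) i l = if l₀ = l then 1 else 0 := by
        intro l; rw [ih, h]; simp [eq_comm]
      simp only [this, Function.iterate_succ_apply', h, ite_mul, one_mul, zero_mul]
      rw [Finset.sum_ite_eq]
      simp [step, nmat]
      congr

lemma det_one_sub_eq_one {M : Matrix (Fin N) (Fin N) ℤ} (hM : IsNilpotent M) :
    (1 - M).det = 1 := by
  have hu := Matrix.isUnit_charpolyRev_of_isNilpotent hM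
  obtain ⟨r, hr, hrc⟩ := Polynomial.isUnit_iff.mp hu
  have h0 : Polynomial.eval 0 (Matrix.charpolyRev M) = 1 := Matrix.eval_charpolyRev
  rw [← hrc, Polynomial.eval_C] at h0
  have hcp : Matrix.charpolyRev M = 1 := by rw [← hrc, h0, Polynomial.C_1]
  have hmap : (1 - (Polynomial.X : Polynomial ℤ) • M.map Polynomial.C).map
      (Polynomial.evalRingHom 1) = 1 - M := by
    ext i j
    rcases eq_or_ne i j with h | h <;>
      simp [Matrix.map_apply, Matrix.one_apply, h, Matrix.smul_apply]
  have := RingHom.map_det (Polynomial.evalRingHom 1)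
      (1 - (Polynomial.X : Polynomial ℤ) • M.map Polynomial.C)
  rw [RingHom.mapMatrix_apply, hmap] at this
  rw [← this]
  show Polynomial.eval 1 (Matrix.charpolyRev M) = 1
  rw [hcp]; simp


/-- Key dichotomy: the determinant of `1 - (partial function matrix)` is `0` or `1`. -/
lemma det_mem (g : Fin N → Option (Fin N)) :
    (Matrix.of fun i j => ((if j = i then (1 : ℤ) else 0) - (if g i = some j then 1 else 0))).det
      = 0 ∨
    (Matrix.of fun i j => ((if j = i then (1 : ℤ) else 0) - (if g i = some j then 1 else 0))).det
      = 1 := by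
  have hA : (Matrix.of fun i j =>
      ((if j = i then (1 : ℤ) else 0) - (if g i = some j then 1 else 0))) = 1 - nmat g := by
    ext i j
    rcases eq_or_ne i j with h | h
    · simp [h, nmat, Matrix.one_apply]
    · simp [Matrix.one_apply, h, Ne.symm h, nmat]
  rw [hA]
  by_cases hcyc : ∃ i, ∃ k, 0 < k ∧ (step g)^[k] (some i) = some i
  · left
    obtain ⟨i, k, hk, hik⟩ := hcyc
    set y : ℕ → Fin N := fun l => ((step g)^[l] (some i)).getD i with hy
    have hsome : ∀ l, l ≤ k → (step g)^[l] (some i) = some (y l) := by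
      intro l hl
      have hk' : ((step g)^[k] (some i)).isSome := by rw [hik]; rfl
      have := step_isSome g hl hk'
      rcases h' : (step g)^[l] (some i) with _ | a
      · rw [h'] at this; simp at this
      · simp [hy, h']
    have hy0 : y 0 = i := by simp [hy]
    have hyk : y k = y 0 := by
      have := hsome k le_rfl
      rw [hik] at this
      simpa [hy0] using (Option.some_inj.mp this).symm
    have hsucc : ∀ l, l < k → g (y l) = some (y (l + 1)) := by
      intro l hl
      have h1 := hsome l (le_of_lt hl)
      have h2 := hsome (l + 1) hl
      rw [Function.iterate_succ_apply', h1] at h2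
      simpa [step] using h2
    set v : Fin N → ℤ := fun j => ∑ l ∈ Finset.range k, if y l = j then 1 else 0 with hv
    have hvne : v ≠ 0 := by
      intro h
      have hpos : 0 < v (y 0) := by
        apply Finset.sum_pos'
        · intro l _; positivity
        · exact ⟨0, Finset.mem_range.mpr hk, by simp⟩
      rw [h] at hpos; simp at hpos
    have hvm : Matrix.vecMul v (1 - nmat g) = 0 := by
      funext j'
      have expand : Matrix.vecMul v (1 - nmat g) j'
          = ∑ j, v j * ((1 - nmat g) j j') := by
        simp [Matrix.vecMul, dotProduct]
      rw [expand]
      have swap : ∑ j, v j * ((1 - nmat g) j j')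
          = ∑ l ∈ Finset.range k, ((1 - nmat g) (y l) j') := by
        simp only [hv, Finset.sum_mul, ite_mul, one_mul, zero_mul]
        rw [Finset.sum_comm]
        refine Finset.sum_congr rfl fun l _ => ?_
        rw [Finset.sum_ite_eq Finset.univ (y l) (fun j => (1 - nmat g) j j')]
        simp
      rw [swap]
      have term : ∀ l ∈ Finset.range k, ((1 - nmat g) (y l) j')
          = (if y l = j' then (1:ℤ) else 0) - (if y (l+1) = j' then 1 else 0) := by
        intro l hl
        rw [Finset.mem_range] at hl
        have := hsucc l hl
        simp [Matrix.sub_apply, Matrix.one_apply, nmat, this, eq_comm]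
      rw [Finset.sum_congr rfl term, Finset.sum_sub_distrib]
      set f : ℕ → ℤ := fun l => if y l = j' then (1:ℤ) else 0 with hf
      have h1 := Finset.sum_range_succ' f k
      have h2 := Finset.sum_range_succ f k
      have hfk : f k = f 0 := by simp [hf, hyk]
      have : ∑ l ∈ Finset.range k, f (l + 1) = ∑ l ∈ Finset.range k, f l := by
        rw [h2, hfk] at h1; linarith
      rw [this]; ring_nf; rfl
    exact (Matrix.exists_vecMul_eq_zero_iff).mp ⟨v, hvne, hvm⟩
  · right
    push_neg at hcyc
    have hnone : ∀ i : Fin N, (step g)^[N] (some i) = none := by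
      intro i
      by_contra hne
      have hiss : ((step g)^[N] (some i)).isSome := Option.ne_none_iff_isSome.mp hne
      set y : ℕ → Fin N := fun l => ((step g)^[l] (some i)).getD i with hy
      have hsome : ∀ l, l ≤ N → (step g)^[l] (some i) = some (y l) := by
        intro l hl
        have := step_isSome g hl hiss
        rcases h' : (step g)^[l] (some i) with _ | a
        · rw [h'] at this; simp at this
        · simp [hy, h']
      have key : ∀ a b : Fin (N + 1), (a : ℕ) < (b : ℕ) → y (a : ℕ) = y (b : ℕ) → False := by
        intro a b hltb hyab
        have h3 : (step g)^[((b : ℕ) - (a : ℕ)) + (a : ℕ)] (some i)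
            = (step g)^[(b : ℕ) - (a : ℕ)] ((step g)^[(a : ℕ)] (some i)) :=
          Function.iterate_add_apply _ _ _ _
        rw [Nat.sub_add_cancel (le_of_lt hltb), hsome (a : ℕ) (by omega),
          hsome (b : ℕ) (Nat.lt_succ_iff.mp b.isLt)] at h3
        exact hcyc (y (a : ℕ)) ((b : ℕ) - (a : ℕ)) (by omega)
          (h3.symm.trans (by rw [hyab]))
      obtain ⟨a, b, hab, hyab⟩ := Fintype.exists_ne_map_eq_of_card_lt
        (fun l : Fin (N + 1) => y (l : ℕ)) (by simp)
      have hne' : (a : ℕ) ≠ (b : ℕ) := fun h => hab (Fin.ext h)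
      rcases hne'.lt_or_gt with h | h
      · exact key a b h hyab
      · exact key b a h hyab.symm
    have hnil : IsNilpotent (nmat g) := by
      refine ⟨N, ?_⟩
      ext i j
      rw [nmat_pow, hnone]
      simp
    exact det_one_sub_eq_one hnil

/-- The scalar matrix appearing as coefficient of a monomial in the expansion. -/
def Wz (σ : Fin N → Fin (N + 1)) (c : Fin N → Fin (N + 1)) : Matrix (Fin N) (Fin N) ℤ :=
  Matrix.of fun i j => (if j = i then 1 else 0) - (if σ j = c i then 1 else 0)

lemma Wz_det_mem {σ : Fin N → Fin (N + 1)} (hσ : Function.Injective σ)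
    (c : Fin N → Fin (N + 1)) : (Wz σ c).det = 0 ∨ (Wz σ c).det = 1 := by
  classical
  set g : Fin N → Option (Fin N) := fun i =>
    if h : ∃ j, σ j = c i then some h.choose else none with hg
  have hiff : ∀ i j, (g i = some j) ↔ σ j = c i := by
    intro i j
    by_cases h : ∃ j, σ j = c i
    · simp only [hg, dif_pos h, Option.some_inj]
      constructor
      · rintro rfl; exact h.choose_spec
      · intro hj; exact hσ (h.choose_spec.trans hj.symm)
    · simp only [hg, dif_neg h]
      constructor
      · intro hj; exact absurd hj (by simp)
      · intro hj; exact absurd ⟨j, hj⟩ h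
  have : Wz σ c = Matrix.of fun i j =>
      ((if j = i then (1 : ℤ) else 0) - (if g i = some j then 1 else 0)) := by
    ext i j
    have := hiff i j
    simp only [Wz, Matrix.of_apply]
    congr 1
    exact if_congr this.symm rfl rfl
  rw [this]
  exact det_mem g

/-- The generator matrix. -/
noncomputable def Hmat (n : ℕ) : Matrix (Fin (n + 1)) (Fin (n + 1))
    (MvPolynomial (Fin (n + 1) × Fin (n + 1)) ℤ) :=
  fun a c => if a = c then ∑ a' ∈ Finset.univ.erase c, MvPolynomial.X (a', c)
    else - MvPolynomial.X (a, c)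

/-- Multilinear expansion of the principal cofactor. -/
lemma det_expand (n : ℕ) (b : Fin (n + 1)) :
    ((Hmat n).submatrix b.succAbove b.succAbove).det
      = ∑ c ∈ Fintype.piFinset (fun i : Fin n => Finset.univ.erase (b.succAbove i)),
          MvPolynomial.C (Wz b.succAbove c).det * ∏ i, MvPolynomial.X (c i, b.succAbove i) := by
  classical
  set σ := b.succAbove with hσ
  have hσinj : Function.Injective σ := Fin.succAbove_right_injective
  set w : Fin n → Fin (n + 1) → (Fin n → MvPolynomial (Fin (n + 1) × Fin (n + 1)) ℤ) := fun i a =>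
    fun j => (if j = i then (1 : MvPolynomial (Fin (n + 1) × Fin (n + 1)) ℤ) else 0) - (if σ j = a then 1 else 0) with hw
  rw [← Matrix.det_transpose]
  have hrows : (((Hmat n).submatrix σ σ)ᵀ : Matrix (Fin n) (Fin n) (MvPolynomial (Fin (n + 1) × Fin (n + 1)) ℤ))
      = fun i => ∑ a ∈ Finset.univ.erase (σ i), (MvPolynomial.X (a, σ i) : MvPolynomial (Fin (n + 1) × Fin (n + 1)) ℤ) • w i a := by
    funext i j
    simp only [Matrix.transpose_apply, Matrix.submatrix_apply, Finset.sum_apply,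
      Pi.smul_apply, smul_eq_mul, hw]
    rcases eq_or_ne j i with h | h
    · subst h
      rw [Hmat, if_pos rfl]
      refine Finset.sum_congr rfl fun a ha => ?_
      have ha' : a ≠ σ j := (Finset.mem_erase.mp ha).1
      rw [if_pos rfl, if_neg (fun hh => ha' hh.symm)]
      ring
    · have hσne : σ j ≠ σ i := fun hh => h (hσinj hh)
      rw [Hmat, if_neg hσne]
      have hterm : ∀ a ∈ Finset.univ.erase (σ i),
          MvPolynomial.X (a, σ i) * ((if j = i then (1 : MvPolynomial (Fin (n + 1) × Fin (n + 1)) ℤ) else 0)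
            - (if σ j = a then 1 else 0))
          = if a = σ j then -MvPolynomial.X (a, σ i) else 0 := by
        intro a _
        rw [if_neg h]
        rcases eq_or_ne a (σ j) with h' | h'
        · subst h'; simp
        · rw [if_neg (fun hh => h' hh.symm), if_neg h']
          ring
      rw [Finset.sum_congr rfl hterm, Finset.sum_ite_eq' (Finset.univ.erase (σ i)) (σ j)]
      rw [if_pos (Finset.mem_erase.mpr ⟨hσne, Finset.mem_univ _⟩)]
  have hdet : ∀ A : Matrix (Fin n) (Fin n) (MvPolynomial (Fin (n + 1) × Fin (n + 1)) ℤ), A.det = Matrix.detRowAlternating A :=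
    fun _ => rfl
  rw [hdet, hrows, ← Matrix.detRowAlternating.coe_multilinearMap]
  rw [MultilinearMap.map_sum_finset]
  refine Finset.sum_congr rfl fun c hc => ?_
  rw [MultilinearMap.map_smul_univ]
  rw [Matrix.detRowAlternating.coe_multilinearMap]
  have : Matrix.detRowAlternating (fun i => w i (c i))
      = ((Wz σ c).map (Int.castRingHom (MvPolynomial (Fin (n + 1) × Fin (n + 1)) ℤ))).det := by
    show Matrix.det (fun i => w i (c i)) = _
    congr 1
    refine Matrix.ext fun i j => ?_
    simp only [Matrix.map_apply, Wz, Matrix.of_apply, map_sub, hw]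
    congr 1 <;>
      rw [apply_ite (Int.castRingHom (MvPolynomial (Fin (n + 1) × Fin (n + 1)) ℤ))] <;> simp
  rw [this, ← RingHom.mapMatrix_apply, ← RingHom.map_det]
  have hCcast : (Int.castRingHom (MvPolynomial (Fin (n + 1) × Fin (n + 1)) ℤ)) = (MvPolynomial.C :
      ℤ →+* MvPolynomial (Fin (n + 1) × Fin (n + 1)) ℤ) := Subsingleton.elim _ _
  rw [hCcast, smul_eq_mul, mul_comm]

lemma prod_X_eq {ι τ : Type*} [DecidableEq τ] (s : Finset ι) (p : ι → τ) :
    (∏ i ∈ s, (MvPolynomial.X (p i) : MvPolynomial τ ℤ))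
      = MvPolynomial.monomial (∑ i ∈ s, Finsupp.single (p i) 1) 1 := by
  classical
  induction s using Finset.cons_induction with
  | empty => simp
  | cons a s ha ih =>
    rw [Finset.prod_cons, Finset.sum_cons, ih, MvPolynomial.X, MvPolynomial.monomial_mul, one_mul]

/-- All coefficients of the principal cofactor are `0` or `1`. -/
lemma coeff_mem (n : ℕ) (b : Fin (n + 1)) (m : Fin (n + 1) × Fin (n + 1) →₀ ℕ) :
    ((Hmat n).submatrix b.succAbove b.succAbove).det.coeff m = 0 ∨
    ((Hmat n).submatrix b.succAbove b.succAbove).det.coeff m = 1 := by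
  classical
  set σ := b.succAbove with hσ
  have hσinj : Function.Injective σ := Fin.succAbove_right_injective
  set S := Fintype.piFinset (fun i : Fin n => Finset.univ.erase (σ i)) with hS
  set D : (Fin n → Fin (n + 1)) → (Fin (n + 1) × Fin (n + 1) →₀ ℕ) :=
    fun c => ∑ i, Finsupp.single (c i, σ i) 1 with hD
  have hDinj : ∀ c₁ c₂ : Fin n → Fin (n + 1), D c₁ = D c₂ → c₁ = c₂ := by
    intro c₁ c₂ hEq
    funext i
    by_contra hne
    have key : ∀ (c : Fin n → Fin (n + 1)) (x : Fin (n + 1)),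
        (D c) (x, σ i) = ∑ i' : Fin n, if i' = i ∧ c i = x then 1 else 0 := by
      intro c x
      rw [hD]
      rw [Finsupp.finset_sum_apply]
      refine Finset.sum_congr rfl fun i' _ => ?_
      rw [Finsupp.single_apply]
      congr 1
      refine propext ⟨fun h => ?_, fun h => ?_⟩
      · have h2 := congrArg Prod.snd h
        have hi : i' = i := hσinj h2
        exact ⟨hi, by have h1 := congrArg Prod.fst h; rw [← hi]; exact h1⟩
      · obtain ⟨h1, h2⟩ := h
        subst h1; rw [h2]
    have e1 : (D c₁) (c₁ i, σ i) = 1 := by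
      rw [key]; simp
    have e2 : (D c₂) (c₁ i, σ i) = 0 := by
      rw [key]
      refine Finset.sum_eq_zero fun i' _ => ?_
      rw [if_neg]
      rintro ⟨-, h2⟩
      exact hne h2.symm
    rw [hEq, e2] at e1
    exact absurd e1 (by norm_num)
  have hcoeff : ((Hmat n).submatrix σ σ).det.coeff m
      = ∑ c ∈ S.filter (fun c => D c = m), (Wz σ c).det := by
    rw [det_expand n b, MvPolynomial.coeff_sum]
    rw [Finset.sum_filter]
    refine Finset.sum_congr rfl fun c _ => ?_
    rw [prod_X_eq Finset.univ (fun i => (c i, σ i)), MvPolynomial.coeff_C_mul,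
      MvPolynomial.coeff_monomial]
    by_cases h : D c = m
    · rw [if_pos h, if_pos (by rw [hD] at h; exact h)]
      ring
    · rw [if_neg h, if_neg (by rw [hD] at h; exact h)]
      ring
  rw [hcoeff]
  by_cases hex : ∃ c ∈ S, D c = m
  · obtain ⟨c₀, hc₀, hDc₀⟩ := hex
    have hfilter : S.filter (fun c => D c = m) = {c₀} := by
      ext c
      simp only [Finset.mem_filter, Finset.mem_singleton]
      constructor
      · rintro ⟨hc, hDc⟩
        exact hDinj c c₀ (hDc.trans hDc₀.symm)
      · rintro rfl
        exact ⟨hc₀, hDc₀⟩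
    rw [hfilter, Finset.sum_singleton]
    exact Wz_det_mem hσinj c₀
  · have hfilter : S.filter (fun c => D c = m) = ∅ := by
      rw [Finset.filter_eq_empty_iff]
      intro c hc hDc
      exact hex ⟨c, hc, hDc⟩
    rw [hfilter, Finset.sum_empty]
    exact Or.inl rfl

lemma aeval_nonneg {τ : Type*} (p : MvPolynomial τ ℤ)
    (hp : ∀ m, p.coeff m = 0 ∨ p.coeff m = 1) (v : τ → ℝ) (hv : ∀ x, 0 ≤ v x) :
    0 ≤ MvPolynomial.aeval v p := by
  rw [MvPolynomial.aeval_def, MvPolynomial.eval₂_eq]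
  refine Finset.sum_nonneg fun d _ => mul_nonneg ?_ ?_
  · rcases hp d with h | h <;> simp [h]
  · exact Finset.prod_nonneg fun i _ => pow_nonneg (hv i) _

end PCPC

/-- For a Markov generator H with off-diagonal entries -r_{ab} and columns summing to
zero, each principal cofactor det H(b,b), viewed as a polynomial in the rates, has all
coefficients in {0,1}; in particular its value is nonnegative for nonnegative rates. -/
theorem principal_cofactor_polynomial_coeffs (n : ℕ) (b : Fin (n + 1)) :
    let r : Fin (n + 1) → Fin (n + 1) → MvPolynomial (Fin (n + 1) × Fin (n + 1)) ℤ :=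
      fun a c => MvPolynomial.X (a, c)
    let H : Matrix (Fin (n + 1)) (Fin (n + 1)) (MvPolynomial (Fin (n + 1) × Fin (n + 1)) ℤ) :=
      fun a c => if a = c then ∑ a' ∈ Finset.univ.erase c, r a' c else - r a c
    (∀ m, (H.submatrix b.succAbove b.succAbove).det.coeff m = 0 ∨
          (H.submatrix b.succAbove b.succAbove).det.coeff m = 1) ∧
    (∀ v : Fin (n + 1) × Fin (n + 1) → ℝ, (∀ p, 0 ≤ v p) →
      0 ≤ MvPolynomial.aeval v (H.submatrix b.succAbove b.succAbove).det) := by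
  intro r H
  have hH : H = PCPC.Hmat n := rfl
  rw [hH]
  exact ⟨fun m => PCPC.coeff_mem n b m,
    fun v hv => PCPC.aeval_nonneg _ (PCPC.coeff_mem n b) v hv⟩
end

section
/- The partition function of the one-transit walk model satisfies the convolution identity Z_n(z₁,z₂) = (z₁z₂)^n ∑_{p=0}^n Z̃_p(z₁) Z̃_{n-p}(z₂), where Z̃_m(z) = ∑_{q=0}^m B_{m,q} z^{-q} is the one-sided contact generating function. -/
/-- Ballot number B_{m,q}, with B_{0,0} = 1 and B_{m,q} = 0 for q > m. -/
noncomputable def Bq (m q : ℕ) : ℝ :=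
  if m = 0 then (if q = 0 then 1 else 0)
  else if q ≤ m then
    (q : ℝ) * (2 * m - q - 1).factorial / ((m.factorial : ℝ) * (m - q).factorial)
  else 0

/-- One-sided contact generating function Z̃_m(z) = ∑_q B_{m,q} z^{-q}. -/
noncomputable def Zt (m : ℕ) (z : ℝ) : ℝ := ∑ q ∈ Finset.range (m + 1), Bq m q * z⁻¹ ^ q

open Finset

lemma Bq_of_lt {m q : ℕ} (h : m < q) : Bq m q = 0 := by
  rcases Nat.eq_zero_or_pos m with hm | hm
  · subst hm; simp [Bq]; omega
  · simp [Bq, Nat.pos_iff_ne_zero.mp hm]; omega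

lemma Bq_zero_right {m : ℕ} (h : m ≠ 0) : Bq m 0 = 0 := by simp [Bq, h]

lemma Bq_zero_zero : Bq 0 0 = 1 := by simp [Bq]

lemma Bq_self (m : ℕ) : Bq m m = 1 := by
  rcases Nat.eq_zero_or_pos m with hm | hm
  · subst hm; simp [Bq]
  · have hm' : m ≠ 0 := Nat.pos_iff_ne_zero.mp hm
    simp only [Bq, hm', if_false, le_refl, if_pos]
    have h1 : 2 * m - m - 1 = m - 1 := by omega
    have h2 : m - m = 0 := by omega
    rw [h1, h2]
    have h3 : (m : ℝ) * (m - 1).factorial = m.factorial := by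
      rw [show m = (m - 1) + 1 by omega, Nat.factorial_succ]
      push_cast [show (m - 1) + 1 = m by omega]
      ring
    rw [Nat.factorial_zero, show ((m : ℝ) * (m - 1).factorial) = m.factorial from h3]
    field_simp
    norm_num

lemma Bq_formula {m q : ℕ} (hm : m ≠ 0) (hq : q ≤ m) :
    Bq m q = (q : ℝ) * (2 * m - q - 1).factorial / ((m.factorial : ℝ) * (m - q).factorial) := by
  simp [Bq, hm, hq]

/-- The fundamental recurrence of the ballot numbers. -/
lemma Bq_rec (m q : ℕ) (hm : 1 ≤ m) (hq : 1 ≤ q) :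
    Bq m q = Bq m (q + 1) + Bq (m - 1) (q - 1) := by
  rcases lt_trichotomy m q with h | h | h
  · rw [Bq_of_lt h, Bq_of_lt (by omega), Bq_of_lt (by omega)]; ring
  · subst h
    rw [Bq_self, Bq_of_lt (by omega), Bq_self]; ring
  · -- q < m : set q = b + 1, m = b + a + 2
    obtain ⟨b, rfl⟩ : ∃ b, q = b + 1 := ⟨q - 1, by omega⟩
    obtain ⟨a, rfl⟩ : ∃ a, m = b + a + 2 := ⟨m - (b + 1) - 1, by omega⟩
    rw [Bq_formula (by omega) (by omega), Bq_formula (by omega) (by omega),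
      show (b + a + 2) - 1 = b + a + 1 by omega, show (b + 1) - 1 = b by omega,
      Bq_formula (by omega) (by omega)]
    rw [show 2 * (b + a + 2) - (b + 1) - 1 = (b + 2 * a + 1) + 1 by omega,
      show (b + a + 2) - (b + 1) = a + 1 by omega,
      show 2 * (b + a + 2) - (b + 1 + 1) - 1 = b + 2 * a + 1 by omega,
      show (b + a + 2) - (b + 1 + 1) = a by omega,
      show 2 * (b + a + 1) - b - 1 = b + 2 * a + 1 by omega,
      show (b + a + 1) - b = a + 1 by omega]
    rw [Nat.factorial_succ (b + 2 * a + 1),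
      show b + a + 2 = (b + a + 1) + 1 from rfl, Nat.factorial_succ (b + a + 1),
      Nat.factorial_succ a]
    have h1 : (0:ℝ) < (b + a + 1).factorial := by positivity
    have h2 : (0:ℝ) < a.factorial := by positivity
    have h3 : (0:ℝ) < (b + 2 * a + 1).factorial := by positivity
    field_simp
    push_cast
    ring

lemma cat_real (k : ℕ) :
    (catalan k : ℝ) = (2 * k).factorial / ((k + 1).factorial * k.factorial) := by
  have h1 : (k + 1) * catalan k = k.centralBinom := succ_mul_catalan_eq_centralBinom k
  have h2 : k.centralBinom * k.factorial * k.factorial = (2 * k).factorial := by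
    have := Nat.choose_mul_factorial_mul_factorial (show k ≤ 2 * k by omega)
    rw [Nat.centralBinom]
    rw [show 2 * k - k = k by omega] at this
    exact this
  have h3 : (k + 1) * catalan k * k.factorial * k.factorial = (2 * k).factorial := by
    rw [h1, h2]
  have h4 : ((k + 1).factorial : ℝ) = (k + 1) * k.factorial := by
    rw [Nat.factorial_succ]; push_cast; ring
  have h5 : ((k:ℝ) + 1) * catalan k * k.factorial * k.factorial = (2 * k).factorial := by
    exact_mod_cast congrArg (Nat.cast : ℕ → ℝ) h3
  rw [h4]
  field_simp
  nlinarith [h5]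

lemma Bq_one (s : ℕ) : Bq (s + 1) 1 = catalan s := by
  rw [Bq_formula (by omega) (by omega), cat_real,
    show 2 * (s + 1) - 1 - 1 = 2 * s by omega, show s + 1 - 1 = s by omega]
  ring

lemma Bq_two (s : ℕ) : Bq (s + 2) 2 = catalan (s + 1) := by
  rw [Bq_formula (by omega) (by omega), cat_real,
    show 2 * (s + 2) - 2 - 1 = (2 * s + 1) by omega, show s + 2 - 2 = s by omega,
    show 2 * (s + 1) = (2 * s + 1) + 1 from rfl, Nat.factorial_succ (2 * s + 1),
    show s + 1 + 1 = (s + 1) + 1 from rfl, Nat.factorial_succ (s + 1), Nat.factorial_succ s]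
  have h1 : (0:ℝ) < (2 * s + 1).factorial := by positivity
  have h2 : (0:ℝ) < s.factorial := by positivity
  have h3 : (0:ℝ) < (s + 1).factorial := by positivity
  field_simp
  push_cast
  ring

lemma conv_zero (n q' : ℕ) :
    ∑ p ∈ range (n + 1), Bq p 0 * Bq (n - p) q' = Bq n q' := by
  rw [Finset.sum_eq_single_of_mem 0 (by simp)]
  · simp [Bq_zero_zero]
  · intro p _ hp
    rw [Bq_zero_right hp]; ring

lemma conv_right_zero (n q : ℕ) :
    ∑ p ∈ range (n + 1), Bq p q * Bq (n - p) 0 = Bq n q := by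
  rw [Finset.sum_eq_single_of_mem n (by simp [mem_range])]
  · simp [Bq_zero_zero]
  · intro p hp hpn
    rw [Bq_zero_right (by simp [mem_range] at hp; omega)]; ring

lemma conv_one_one (n : ℕ) :
    ∑ p ∈ range (n + 1), Bq p 1 * Bq (n - p) 1 = Bq n 2 := by
  match n with
  | 0 => simp [Bq_of_lt]
  | 1 =>
    rw [show (1:ℕ) + 1 = 2 from rfl]
    rw [Finset.sum_range_succ, Finset.sum_range_succ, Finset.sum_range_zero]
    rw [Bq_of_lt (show 0 < 1 by omega), Bq_of_lt (show 1 < 2 by omega)]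
    norm_num
  | (k+2) =>
    rw [Finset.sum_range_succ, Finset.sum_range_succ' _ (k + 1)]
    rw [show k + 2 - (k + 2) = 0 by omega, Bq_of_lt (show (0:ℕ) < 1 by omega), Bq_two]
    have : ∑ i ∈ range (k + 1), Bq (i + 1) 1 * Bq (k + 2 - (i + 1)) 1
        = ∑ i ∈ range (k + 1), (catalan i : ℝ) * catalan (k - i) := by
      apply Finset.sum_congr rfl
      intro i hi
      simp only [mem_range] at hi
      rw [Bq_one, show k + 2 - (i + 1) = (k - i) + 1 by omega, Bq_one]
    rw [this]
    have hc : catalan (k + 1) = ∑ i ∈ range (k + 1), catalan i * catalan (k - i) := by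
      rw [catalan_succ]
      rw [Fin.sum_univ_eq_sum_range (fun i => catalan i * catalan (k - i)) (k + 1)]
    rw [hc]
    push_cast
    ring

lemma conv_step (n q q' : ℕ) (hq : 1 ≤ q) :
    ∑ p ∈ range (n + 1), Bq p q * Bq (n - p) q'
      = (∑ p ∈ range (n + 1), Bq p (q + 1) * Bq (n - p) q')
        + ∑ p ∈ range n, Bq p (q - 1) * Bq (n - 1 - p) q' := by
  rw [Finset.sum_range_succ' _ n,
    Finset.sum_range_succ' (fun p => Bq p (q + 1) * Bq (n - p) q') n]
  rw [Bq_of_lt (show (0:ℕ) < q by omega), Bq_of_lt (show (0:ℕ) < q + 1 by omega)]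
  simp only [zero_mul, add_zero]
  rw [← Finset.sum_add_distrib]
  apply Finset.sum_congr rfl
  intro i _
  rw [Bq_rec (i + 1) q (by omega) hq, show i + 1 - 1 = i from rfl,
    show n - (i + 1) = n - 1 - i by omega]
  ring

lemma conv_step' (n q q' : ℕ) (hq' : 1 ≤ q') :
    ∑ p ∈ range (n + 1), Bq p q * Bq (n - p) q'
      = (∑ p ∈ range (n + 1), Bq p q * Bq (n - p) (q' + 1))
        + ∑ p ∈ range n, Bq p q * Bq (n - 1 - p) (q' - 1) := by
  rw [Finset.sum_range_succ, Finset.sum_range_succ (fun p => Bq p q * Bq (n - p) (q' + 1))]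
  rw [Nat.sub_self, Bq_of_lt (show (0:ℕ) < q' by omega),
    Bq_of_lt (show (0:ℕ) < q' + 1 by omega)]
  simp only [mul_zero, add_zero]
  rw [← Finset.sum_add_distrib]
  apply Finset.sum_congr rfl
  intro i hi
  simp only [mem_range] at hi
  rw [Bq_rec (n - i) q' (by omega) hq', show n - i - 1 = n - 1 - i by omega]
  ring

lemma conv_one : ∀ q' n, ∑ p ∈ range (n + 1), Bq p 1 * Bq (n - p) q' = Bq n (q' + 1) := by
  intro q'
  induction q' using Nat.strong_induction_on with
  | _ q' ih =>
    match q' with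
    | 0 => exact fun n => conv_right_zero n 1
    | 1 => exact conv_one_one
    | (k+2) =>
      intro n
      match n with
      | 0 =>
        simp [Bq_of_lt (show (0:ℕ) < 1 by omega), Bq_of_lt (show (0:ℕ) < k + 2 + 1 by omega)]
      | (m+1) =>
        have h := conv_step' (m + 1) 1 (k + 1) (by omega)
        rw [ih (k + 1) (by omega) (m + 1)] at h
        have h2 : ∑ p ∈ range (m + 1), Bq p 1 * Bq (m + 1 - 1 - p) (k + 1 - 1)
            = Bq m (k + 1) := by
          have := ih k (by omega) m
          simpa using this
        rw [h2] at h
        have h3 := Bq_rec (m + 1) (k + 1 + 1) (by omega) (by omega)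
        simp only [show m + 1 - 1 = m from rfl, show k + 1 + 1 - 1 = k + 1 from rfl] at h3
        linarith [h, h3]

/-- Convolution identity for ballot numbers. -/
lemma Bq_conv : ∀ q q' n, ∑ p ∈ range (n + 1), Bq p q * Bq (n - p) q' = Bq n (q + q') := by
  intro q
  induction q using Nat.strong_induction_on with
  | _ q ih =>
    match q with
    | 0 => intro q' n; rw [conv_zero, Nat.zero_add]
    | 1 => intro q' n; rw [conv_one, Nat.add_comm]
    | (k+2) =>
      intro q' n
      match n with
      | 0 =>
        simp [Bq_of_lt (show (0:ℕ) < k + 2 by omega),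
          Bq_of_lt (show (0:ℕ) < k + 2 + q' by omega)]
      | (m+1) =>
        have h := conv_step (m + 1) (k + 1) q' (by omega)
        rw [ih (k + 1) (by omega) q' (m + 1)] at h
        have h2 : ∑ p ∈ range (m + 1), Bq p (k + 1 - 1) * Bq (m + 1 - 1 - p) q'
            = Bq m (k + q') := by
          have := ih k (by omega) q' m
          simpa using this
        rw [h2] at h
        have h3 := Bq_rec (m + 1) (k + 1 + q') (by omega) (by omega)
        have e1 : k + 1 + q' + 1 = k + 2 + q' := by omega
        have e2 : m + 1 - 1 = m := rfl
        have e3 : k + 1 + q' - 1 = k + q' := by omega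
        rw [e1, e2, e3] at h3
        linarith [h, h3]

/-- The one-transit partition function factorizes as a convolution of the two
one-sided contact generating functions. -/
theorem one_transit_convolution (n : ℕ) (z₁ z₂ : ℝ) (h1 : 0 < z₁) (h2 : 0 < z₂) :
    ∑ p ∈ Finset.range (n + 1), Bq n p *
        ∑ q ∈ Finset.range (p + 1), z₁⁻¹ ^ q * z₂⁻¹ ^ (p - q) =
      ∑ p ∈ Finset.range (n + 1), Zt p z₁ * Zt (n - p) z₂ := by
  have hA : (∑ p ∈ range (n + 1), Bq n p * ∑ q ∈ range (p + 1), z₁⁻¹ ^ q * z₂⁻¹ ^ (p - q))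
      = ∑ q ∈ range (n + 1), ∑ q' ∈ range (n + 1), Bq n (q + q') * z₁⁻¹ ^ q * z₂⁻¹ ^ q' := by
    have hsplit : ∀ p ∈ range (n + 1),
        Bq n p * ∑ q ∈ range (p + 1), z₁⁻¹ ^ q * z₂⁻¹ ^ (p - q)
        = ∑ q ∈ range (n + 1), if q ≤ p then Bq n p * z₁⁻¹ ^ q * z₂⁻¹ ^ (p - q) else 0 := by
      intro p hp
      simp only [mem_range] at hp
      rw [Finset.mul_sum]
      rw [← Finset.sum_subset (Finset.range_subset_range.mpr (show p + 1 ≤ n + 1 by omega))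
          (fun q _ hq => by
            rw [if_neg]; simp only [mem_range, not_lt] at hq; omega)]
      apply Finset.sum_congr rfl
      intro q hq
      simp only [mem_range] at hq
      rw [if_pos (by omega)]
      ring
    rw [Finset.sum_congr rfl hsplit, Finset.sum_comm]
    apply Finset.sum_congr rfl
    intro q hq
    simp only [mem_range] at hq
    have hfil : (range (n + 1)).filter (fun p => q ≤ p) = Finset.Ico q (n + 1) := by
      ext p; simp only [Finset.mem_filter, mem_range, Finset.mem_Ico]; omega
    rw [← Finset.sum_filter, hfil, Finset.sum_Ico_eq_sum_range]
    rw [show n + 1 - q = (n - q) + 1 by omega]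
    rw [← Finset.sum_subset (Finset.range_subset_range.mpr (show n - q + 1 ≤ n + 1 by omega))
        (fun j _ hj => by
          simp only [mem_range, not_lt] at hj
          rw [Bq_of_lt (show n < q + j by omega)]; ring)]
    apply Finset.sum_congr rfl
    intro j _
    rw [Nat.add_sub_cancel_left]
  have hB : (∑ p ∈ range (n + 1), Zt p z₁ * Zt (n - p) z₂)
      = ∑ q ∈ range (n + 1), ∑ q' ∈ range (n + 1), Bq n (q + q') * z₁⁻¹ ^ q * z₂⁻¹ ^ q' := by
    have hZ : ∀ p ∈ range (n + 1), Zt p z₁ * Zt (n - p) z₂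
        = ∑ q ∈ range (n + 1), ∑ q' ∈ range (n + 1),
            (Bq p q * z₁⁻¹ ^ q) * (Bq (n - p) q' * z₂⁻¹ ^ q') := by
      intro p hp
      simp only [mem_range] at hp
      have e1 : Zt p z₁ = ∑ q ∈ range (n + 1), Bq p q * z₁⁻¹ ^ q := by
        simp only [Zt]
        exact Finset.sum_subset (Finset.range_subset_range.mpr (show p + 1 ≤ n + 1 by omega))
          (fun q _ hq => by
            simp only [mem_range, not_lt] at hq
            rw [Bq_of_lt (show p < q by omega)]; ring)
      have e2 : Zt (n - p) z₂ = ∑ q' ∈ range (n + 1), Bq (n - p) q' * z₂⁻¹ ^ q' := by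
        simp only [Zt]
        exact Finset.sum_subset (Finset.range_subset_range.mpr (show n - p + 1 ≤ n + 1 by omega))
          (fun q _ hq => by
            simp only [mem_range, not_lt] at hq
            rw [Bq_of_lt (show n - p < q by omega)]; ring)
      rw [e1, e2, Finset.sum_mul_sum]
    rw [Finset.sum_congr rfl hZ, Finset.sum_comm]
    apply Finset.sum_congr rfl
    intro q _
    rw [Finset.sum_comm]
    apply Finset.sum_congr rfl
    intro q' _
    have : ∑ p ∈ range (n + 1), (Bq p q * z₁⁻¹ ^ q) * (Bq (n - p) q' * z₂⁻¹ ^ q')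
        = (∑ p ∈ range (n + 1), Bq p q * Bq (n - p) q') * (z₁⁻¹ ^ q * z₂⁻¹ ^ q') := by
      rw [Finset.sum_mul]
      apply Finset.sum_congr rfl
      intro p _
      ring
    rw [this, Bq_conv]
    ring
  rw [hA, hB]
end

section
/- For z > 1/2, the limit of Z̃_n(z) · √π n^{3/2} / 4^n as n → ∞ equals z/(1-2z)²; i.e. the one-sided contact partition function has asymptotics Z̃_n(z) ~ (z/(1-2z)²) · 4^n/(√π n^{3/2}). -/
open Filter

open Topology Real in
lemma osa_h32 (x : ℝ) (hx : 0 ≤ x) : x ^ ((3:ℝ)/2) = x * Real.sqrt x := by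
  rcases hx.eq_or_lt with h | h
  · rw [← h, Real.zero_rpow (by norm_num), Real.sqrt_zero, mul_zero]
  · rw [show (3:ℝ)/2 = 1 + 1/2 by norm_num, Real.rpow_add h, Real.rpow_one,
      Real.sqrt_eq_rpow]

open Topology Real in
lemma osa_cb_eq (m : ℕ) (hm : m ≠ 0) :
    (Nat.centralBinom m : ℝ) * Real.sqrt m / 4 ^ m =
      Stirling.stirlingSeq (2 * m) / Stirling.stirlingSeq m ^ 2 := by
  have hm0 : (0:ℝ) < m := by exact_mod_cast Nat.pos_of_ne_zero hm
  unfold Stirling.stirlingSeq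
  rw [Nat.centralBinom, Nat.cast_choose ℝ (by omega : m ≤ 2 * m),
    (by omega : 2 * m - m = m)]
  have he : (0:ℝ) < Real.exp 1 := Real.exp_pos 1
  have hA : (0:ℝ) < ((m:ℝ) / Real.exp 1) ^ m := by positivity
  have c1 : ((2 * m : ℕ) : ℝ) = 2 * (m:ℝ) := by push_cast; ring
  have c2 : Real.sqrt (2 * ((2 * m : ℕ):ℝ)) = 2 * Real.sqrt m := by
    rw [c1, show (2:ℝ) * (2 * m) = 2^2 * m by ring,
      Real.sqrt_mul (by positivity), Real.sqrt_sq (by norm_num)]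
  have c3 : (((2 * m : ℕ):ℝ) / Real.exp 1) ^ (2 * m)
      = 4 ^ m * (((m:ℝ) / Real.exp 1) ^ m) ^ 2 := by
    rw [c1, show (2:ℝ) * m / Real.exp 1 = 2 * ((m:ℝ) / Real.exp 1) by ring, mul_pow,
      show (2:ℝ) ^ (2 * m) = 4 ^ m by rw [pow_mul]; norm_num,
      show (2 * m) = m * 2 by ring, pow_mul]
  set A := ((m:ℝ) / Real.exp 1) ^ m with hAdef
  rw [c2, c3]
  have hsq : Real.sqrt (2 * (m:ℝ)) ^ 2 = 2 * m := Real.sq_sqrt (by positivity)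
  rw [div_pow, mul_pow, hsq]
  have hms : Real.sqrt m * Real.sqrt m = (m:ℝ) := Real.mul_self_sqrt hm0.le
  have hf1 : ((m.factorial : ℝ)) ≠ 0 := by exact_mod_cast m.factorial_ne_zero
  have hsm : Real.sqrt (m:ℝ) ≠ 0 := by positivity
  have hA' : A ≠ 0 := ne_of_gt hA
  rw [div_div_div_eq]
  rw [eq_div_iff (by positivity)]
  field_simp
  linear_combination hms

open Topology Real in
lemma osa_cb_tendsto :
    Tendsto (fun m : ℕ => (Nat.centralBinom m : ℝ) * Real.sqrt m / 4 ^ m) atTop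
      (𝓝 (1 / Real.sqrt Real.pi)) := by
  have h2 : Tendsto (fun m : ℕ => 2 * m) atTop atTop :=
    tendsto_atTop_mono (fun n => by simpa using (by omega : n ≤ 2 * n)) tendsto_id
  have h1 : Tendsto (fun m : ℕ => Stirling.stirlingSeq (2 * m) / Stirling.stirlingSeq m ^ 2)
      atTop (𝓝 (Real.sqrt π / Real.sqrt π ^ 2)) :=
    (Stirling.tendsto_stirlingSeq_sqrt_pi.comp h2).div
      (Stirling.tendsto_stirlingSeq_sqrt_pi.pow 2)
      (by rw [Real.sq_sqrt Real.pi_pos.le]; exact Real.pi_ne_zero)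
  have h3 : Real.sqrt π / Real.sqrt π ^ 2 = 1 / Real.sqrt π := by
    rw [sq]
    rw [div_mul_eq_div_div, div_self (by positivity : Real.sqrt π ≠ 0)]
  rw [h3] at h1
  apply h1.congr'
  filter_upwards [eventually_ge_atTop 1] with m hm
  exact (osa_cb_eq m (by omega)).symm

open Topology Real in
lemma osa_cb_bound : ∃ K : ℝ, 0 < K ∧
    ∀ m : ℕ, (Nat.centralBinom m : ℝ) * Real.sqrt m / 4 ^ m ≤ K := by
  obtain ⟨K, hK⟩ := osa_cb_tendsto.bddAbove_range
  exact ⟨max K 1, lt_max_of_lt_right one_pos,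
    fun m => le_trans (hK ⟨m, rfl⟩) (le_max_left _ _)⟩

lemma osa_Bq_nonneg (n p : ℕ) : 0 ≤ Bq n p := by
  unfold Bq; split_ifs <;> positivity

lemma osa_Bq_zero_left (n p : ℕ) (hn : 1 ≤ n) (h : n < p) : Bq n p = 0 := by
  unfold Bq; rw [if_neg (by omega), if_neg (by omega)]

lemma osa_Bq_zero (n : ℕ) (hn : 1 ≤ n) : Bq n 0 = 0 := by
  unfold Bq; rw [if_neg (by omega), if_pos (by omega)]
  simp

lemma osa_Bq_one (n : ℕ) (hn : 1 ≤ n) : Bq n 1 = (Nat.centralBinom (n - 1) : ℝ) / n := by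
  obtain ⟨k, rfl⟩ : ∃ k, n = k + 1 := ⟨n - 1, by omega⟩
  unfold Bq
  rw [if_neg (by omega), if_pos (by omega),
    (by omega : 2 * (k+1) - 1 - 1 = 2 * k), (by omega : (k+1) - 1 = k),
    Nat.centralBinom, Nat.cast_choose ℝ (by omega : k ≤ 2 * k),
    (by omega : 2 * k - k = k), Nat.factorial_succ]
  have hf : ((k.factorial : ℝ)) ≠ 0 := by exact_mod_cast k.factorial_ne_zero
  have h2k : (((2 * k).factorial : ℝ)) ≠ 0 := by exact_mod_cast (2 * k).factorial_ne_zero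
  have hk1 : ((k:ℝ) + 1) ≠ 0 := by positivity
  push_cast
  rw [one_mul, div_div]
  ring_nf

lemma osa_Bq_rec (n p : ℕ) (hp : 1 ≤ p) (hpn : p + 1 ≤ n) :
    Bq n (p + 1) = Bq n p * (((p:ℝ) + 1) / p) * (((n:ℝ) - p) / (2 * n - p - 1)) := by
  have h1 : 2 * n - p - 1 = (2 * n - (p+1) - 1) + 1 := by omega
  have h2 : n - p = (n - (p+1)) + 1 := by omega
  set a := 2 * n - (p+1) - 1 with ha
  set b := n - (p+1) with hb
  have hn : n = b + 1 + p := by omega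
  have h2n : 2 * n = a + p + 2 := by omega
  have hB1 : Bq n (p+1) = ((p:ℝ) + 1) * a.factorial / ((n.factorial : ℝ) * b.factorial) := by
    unfold Bq
    rw [if_neg (show ¬ n = 0 by omega), if_pos (show p + 1 ≤ n by omega)]
    push_cast
    rfl
  have hB2 : Bq n p = (p:ℝ) * (((a:ℝ) + 1) * a.factorial) / ((n.factorial : ℝ) * (((b:ℝ) + 1) * b.factorial)) := by
    unfold Bq
    rw [if_neg (show ¬ n = 0 by omega), if_pos (show p ≤ n by omega),
      h1, h2, Nat.factorial_succ, Nat.factorial_succ]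
    push_cast
    ring
  rw [hB1, hB2]
  have e1 : ((n:ℝ) - p) = (b:ℝ) + 1 := by rw [hn]; push_cast; ring
  have e2 : (2 * (n:ℝ) - p - 1) = (a:ℝ) + 1 := by
    have : ((2*n : ℕ) : ℝ) = ((a + p + 2 : ℕ) : ℝ) := by rw [h2n]
    push_cast at this
    linarith
  rw [e1, e2]
  have hf1 : ((n.factorial : ℝ)) ≠ 0 := by exact_mod_cast n.factorial_ne_zero
  have hf2 : ((a.factorial : ℝ)) ≠ 0 := by exact_mod_cast a.factorial_ne_zero
  have hf3 : ((b.factorial : ℝ)) ≠ 0 := by exact_mod_cast b.factorial_ne_zero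
  have hp0 : ((p:ℝ)) ≠ 0 := Nat.cast_ne_zero.mpr (by omega)
  have ha1 : ((a:ℝ)) + 1 ≠ 0 := by positivity
  have hb1 : ((b:ℝ)) + 1 ≠ 0 := by positivity
  push_cast
  field_simp

/-- The rescaled ballot number sequence. -/
noncomputable def osaG (p n : ℕ) : ℝ :=
  Bq n p * (Real.sqrt Real.pi * (n : ℝ) ^ ((3 : ℝ) / 2)) / 4 ^ n

lemma osa_g_nonneg (p n : ℕ) : 0 ≤ osaG p n := by
  unfold osaG
  have := osa_Bq_nonneg n p
  have : (0:ℝ) ≤ (n : ℝ) ^ ((3 : ℝ) / 2) := Real.rpow_nonneg (Nat.cast_nonneg n) _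
  positivity

open Topology Real in
lemma osa_g1_eq (n : ℕ) (hn : 2 ≤ n) :
    osaG 1 n = ((Nat.centralBinom (n - 1) : ℝ) * Real.sqrt ((n:ℝ) - 1) / 4 ^ (n - 1))
      * ((Real.sqrt Real.pi / 4) * Real.sqrt ((n:ℝ) / ((n:ℝ) - 1))) := by
  have hn0 : (0:ℝ) < n := by positivity
  have hn1 : (0:ℝ) < (n:ℝ) - 1 := by
    have : (2:ℝ) ≤ n := by exact_mod_cast hn
    linarith
  unfold osaG
  rw [osa_Bq_one n (by omega), osa_h32 _ (Nat.cast_nonneg n),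
    Real.sqrt_div hn0.le, show (4:ℝ)^n = 4^(n-1) * 4 by
      rw [← pow_succ]; congr 1; omega]
  have hs1 : Real.sqrt ((n:ℝ) - 1) ≠ 0 := by positivity
  field_simp

open Topology Real in
lemma osa_ratio_tendsto (a b : ℝ) :
    Tendsto (fun n : ℕ => ((n:ℝ) + a) / (2 * (n:ℝ) + b)) atTop (𝓝 (1 / 2)) := by
  have h1 : Tendsto (fun n : ℕ => (1 + a * ((n:ℝ))⁻¹) / (2 + b * ((n:ℝ))⁻¹)) atTop
      (𝓝 ((1 + a * 0) / (2 + b * 0))) := by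
    have hinv : Tendsto (fun n : ℕ => ((n:ℝ))⁻¹) atTop (𝓝 0) :=
      tendsto_inv_atTop_zero.comp tendsto_natCast_atTop_atTop
    exact ((tendsto_const_nhds.add (tendsto_const_nhds.mul hinv)).div
      (tendsto_const_nhds.add (tendsto_const_nhds.mul hinv)) (by norm_num))
  simp only [mul_zero, add_zero] at h1
  apply h1.congr'
  filter_upwards [eventually_ge_atTop (⌈|b|⌉₊ + 1)] with n hn
  have hcb : |b| ≤ (⌈|b|⌉₊ : ℝ) := Nat.le_ceil _
  have hnn : ((⌈|b|⌉₊ : ℝ)) + 1 ≤ (n : ℝ) := by exact_mod_cast hn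
  have hb1 : b ≤ |b| := le_abs_self b
  have hb2 : -|b| ≤ b := neg_abs_le b
  have hn0 : (0:ℝ) < (n:ℝ) := by linarith [abs_nonneg b]
  have hdb : (0:ℝ) < 2 * (n:ℝ) + b := by linarith
  field_simp

open Topology Real in
lemma osa_div_sub_one_tendsto :
    Tendsto (fun n : ℕ => (n:ℝ) / ((n:ℝ) - 1)) atTop (𝓝 1) := by
  have h := osa_ratio_tendsto 0 (-2)
  have h2 : Tendsto (fun n : ℕ => 2 * (((n:ℝ) + 0) / (2 * (n:ℝ) + -2))) atTop
      (𝓝 (2 * (1/2))) := h.const_mul 2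
  norm_num at h2
  apply h2.congr'
  filter_upwards [eventually_ge_atTop 2] with n hn
  have h2le : (2:ℝ) ≤ n := by exact_mod_cast hn
  have hn1 : ((n:ℝ)) - 1 ≠ 0 := by intro hc; linarith
  have hn2 : 2 * ((n:ℝ)) + -2 ≠ 0 := by intro hc; linarith
  field_simp
  rw [← sub_eq_add_neg, div_self hn1]

open Topology Real in
lemma osa_g_tendsto : ∀ p : ℕ, 1 ≤ p →
    Tendsto (osaG p) atTop (𝓝 ((p : ℝ) / 2 ^ (p + 1))) := by
  intro p hp
  induction p with
  | zero => omega
  | succ p ih =>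
    rcases Nat.eq_or_lt_of_le hp with h1 | h2
    · -- p + 1 = 1, base case
      have hpz : p = 0 := by omega
      subst hpz
      have hlim : Tendsto (fun n : ℕ =>
          ((Nat.centralBinom (n - 1) : ℝ) * Real.sqrt ((n:ℝ) - 1) / 4 ^ (n - 1))
          * ((Real.sqrt Real.pi / 4) * Real.sqrt ((n:ℝ) / ((n:ℝ) - 1)))) atTop
          (𝓝 ((1 / Real.sqrt Real.pi) * ((Real.sqrt Real.pi / 4) * 1))) := by
        apply Tendsto.mul
        · -- centralBinom part
          have hsub : Tendsto (fun n : ℕ => n - 1) atTop atTop :=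
            tendsto_sub_atTop_nat 1
          have := osa_cb_tendsto.comp hsub
          apply this.congr'
          filter_upwards [eventually_ge_atTop 2] with n hn
          have : ((n - 1 : ℕ) : ℝ) = (n:ℝ) - 1 := by
            have : (1:ℕ) ≤ n := by omega
            push_cast [this]; ring
          simp only [Function.comp_apply, this]
        · have hc : Continuous Real.sqrt := Real.continuous_sqrt
          have := (hc.tendsto 1).comp osa_div_sub_one_tendsto
          rw [show Real.sqrt 1 = 1 by simp] at this
          exact tendsto_const_nhds.mul this
      have hval : (((0 + 1 : ℕ)) : ℝ) / 2 ^ (0 + 1 + 1)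
          = (1 / Real.sqrt Real.pi) * ((Real.sqrt Real.pi / 4) * 1) := by
        have hpi : Real.sqrt Real.pi ≠ 0 := by positivity
        field_simp
        norm_num
      rw [hval]
      apply hlim.congr'
      filter_upwards [eventually_ge_atTop 2] with n hn
      exact (osa_g1_eq n hn).symm
    · -- inductive step: p ≥ 1
      have hp1 : 1 ≤ p := by omega
      have ih' := ih hp1
      have hfac : Tendsto (fun n : ℕ => ((n:ℝ) - p) / (2 * (n:ℝ) - p - 1)) atTop
          (𝓝 (1 / 2)) := by
        have h := osa_ratio_tendsto (-(p:ℝ)) (-(p:ℝ) - 1)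
        apply h.congr
        intro n
        ring_nf
      have hc : Tendsto (fun _ : ℕ => ((p:ℝ) + 1) / p) atTop (𝓝 (((p:ℝ) + 1) / p)) :=
        tendsto_const_nhds
      have hlim := (ih'.mul hc).mul hfac
      have hval : ((p:ℝ) / 2 ^ (p + 1)) * (((p:ℝ) + 1) / p) * (1 / 2)
          = ((p + 1 : ℕ) : ℝ) / 2 ^ ((p + 1) + 1) := by
        have hp0 : ((p:ℝ)) ≠ 0 := Nat.cast_ne_zero.mpr (by omega)
        push_cast
        field_simp
        ring
      rw [← hval]
      apply hlim.congr'
      filter_upwards [eventually_ge_atTop (p + 1)] with n hn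
      show osaG p n * (((p:ℝ) + 1) / p) * (((n:ℝ) - p) / (2 * (n:ℝ) - p - 1)) = osaG (p+1) n
      unfold osaG
      rw [osa_Bq_rec n p hp1 hn]
      ring

lemma osa_g0 (n : ℕ) : osaG 0 n = 0 := by
  rcases Nat.eq_zero_or_pos n with rfl | hn
  · unfold osaG
    simp [Real.zero_rpow (by norm_num : (3:ℝ)/2 ≠ 0)]
  · unfold osaG
    rw [osa_Bq_zero n hn]
    simp

lemma osa_Bq_chain (n : ℕ) (hn : 2 ≤ n) : ∀ p : ℕ, 1 ≤ p → p ≤ n →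
    (2:ℝ) ^ p * Bq n p ≤ 2 * p * Bq n 1 := by
  intro p
  induction p with
  | zero => omega
  | succ p ih =>
    intro _ hpn
    rcases Nat.eq_zero_or_pos p with rfl | hp
    · -- base case p + 1 = 1
      apply le_of_eq
      push_cast
      ring
    · have hrec := osa_Bq_rec n p (by omega) (by omega)
      have hpn' : ((p:ℝ)) + 1 ≤ n := by exact_mod_cast hpn
      have hp1 : (1:ℝ) ≤ (p:ℝ) := by exact_mod_cast hp
      have hden : (0:ℝ) < 2 * (n:ℝ) - p - 1 := by linarith
      have hr2 : ((n:ℝ) - p) / (2 * (n:ℝ) - p - 1) ≤ 1 / 2 := by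
        rw [div_le_iff₀ hden]
        linarith
      have hr0 : (0:ℝ) ≤ ((n:ℝ) - p) / (2 * (n:ℝ) - p - 1) := by
        apply div_nonneg _ hden.le
        linarith
      have hBp := osa_Bq_nonneg n p
      have hB1 := osa_Bq_nonneg n 1
      have hkey : (2:ℝ) ^ p * Bq n p * (((p:ℝ) + 1) / p) ≤ 2 * ((p:ℝ) + 1) * Bq n 1 := by
        have h1 := ih (by omega) (by omega)
        have h2 := mul_le_mul_of_nonneg_right h1 (by positivity : (0:ℝ) ≤ ((p:ℝ) + 1) / p)
        have hp0 : ((p:ℝ)) ≠ 0 := by positivity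
        calc (2:ℝ) ^ p * Bq n p * (((p:ℝ) + 1) / p) ≤ 2 * (p:ℝ) * Bq n 1 * (((p:ℝ) + 1) / p) := h2
          _ = 2 * ((p:ℝ) + 1) * Bq n 1 := by field_simp
      have hmul := mul_le_mul hkey hr2
        hr0 (by positivity : (0:ℝ) ≤ 2 * ((p:ℝ) + 1) * Bq n 1)
      rw [hrec, pow_succ]
      push_cast
      nlinarith [hmul]

open Topology Real in
lemma osa_g1_bound : ∃ C : ℝ, 0 < C ∧ ∀ n : ℕ, 2 ≤ n → osaG 1 n ≤ C := by
  obtain ⟨K, hK0, hK⟩ := osa_cb_bound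
  refine ⟨K * (Real.sqrt Real.pi / 4 * Real.sqrt 2), by positivity, fun n hn => ?_⟩
  rw [osa_g1_eq n hn]
  have hn1 : (1:ℝ) ≤ (n:ℝ) - 1 := by
    have : (2:ℝ) ≤ n := by exact_mod_cast hn
    linarith
  have hcb : (Nat.centralBinom (n - 1) : ℝ) * Real.sqrt ((n:ℝ) - 1) / 4 ^ (n - 1) ≤ K := by
    have := hK (n - 1)
    have hc : ((n - 1 : ℕ) : ℝ) = (n:ℝ) - 1 := by
      have : (1:ℕ) ≤ n := by omega
      push_cast [this]
      ring
    rwa [hc] at this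
  have hs2 : Real.sqrt ((n:ℝ) / ((n:ℝ) - 1)) ≤ Real.sqrt 2 := by
    apply Real.sqrt_le_sqrt
    rw [div_le_iff₀ (by linarith)]
    have : (2:ℝ) ≤ n := by exact_mod_cast hn
    linarith
  have hcb0 : (0:ℝ) ≤ (Nat.centralBinom (n - 1) : ℝ) * Real.sqrt ((n:ℝ) - 1) / 4 ^ (n - 1) := by
    positivity
  calc (Nat.centralBinom (n - 1) : ℝ) * Real.sqrt ((n:ℝ) - 1) / 4 ^ (n - 1)
      * (Real.sqrt Real.pi / 4 * Real.sqrt ((n:ℝ) / ((n:ℝ) - 1)))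
      ≤ K * (Real.sqrt Real.pi / 4 * Real.sqrt 2) := by
        apply mul_le_mul hcb _ (by positivity) hK0.le
        exact mul_le_mul_of_nonneg_left hs2 (by positivity)

/-- For z > 1/2, Z̃ₙ(z) ~ (z/(1-2z)²) 4ⁿ/(√π n^{3/2}). -/
theorem one_sided_asymptotics_high (z : ℝ) (hz : 1 / 2 < z) :
    Tendsto (fun n : ℕ => Zt n z * (Real.sqrt Real.pi * (n : ℝ) ^ ((3 : ℝ) / 2)) / 4 ^ n)
      atTop (nhds (z / (1 - 2 * z) ^ 2)) := by
  have hz0 : (0:ℝ) < z := by linarith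
  set x : ℝ := 2⁻¹ * z⁻¹ with hxdef
  have hx0 : (0:ℝ) < x := by positivity
  have hx1 : x < 1 := by
    rw [hxdef, ← mul_inv]
    have h1 : (1:ℝ) < 2 * z := by linarith
    rw [inv_lt_one_iff₀]
    right
    exact h1
  have hxn : ‖x‖ < 1 := by rw [Real.norm_eq_abs, abs_of_pos hx0]; exact hx1
  obtain ⟨C, hC0, hC⟩ := osa_g1_bound
  -- summable bound
  have hsum : Summable (fun p : ℕ => 2 * C * ((p:ℝ) * x ^ p)) := by
    have h := summable_pow_mul_geometric_of_norm_lt_one 1 hxn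
    exact (h.congr (fun p => by rw [pow_one])).mul_left (2 * C)
  -- pointwise limits
  have hpt : ∀ p : ℕ, Tendsto (fun n : ℕ => osaG p n * z⁻¹ ^ p) atTop
      (nhds ((p:ℝ) / 2 ^ (p + 1) * z⁻¹ ^ p)) := by
    intro p
    rcases Nat.eq_zero_or_pos p with rfl | hp
    · simp only [osa_g0, zero_mul, Nat.cast_zero, zero_div]
      exact tendsto_const_nhds
    · exact (osa_g_tendsto p hp).mul_const _
  -- domination
  have hbd : ∀ᶠ n in atTop, ∀ p : ℕ, ‖osaG p n * z⁻¹ ^ p‖ ≤ 2 * C * ((p:ℝ) * x ^ p) := by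
    filter_upwards [eventually_ge_atTop 2] with n hn
    intro p
    have hgnn : (0:ℝ) ≤ osaG p n := osa_g_nonneg p n
    have hznn : (0:ℝ) ≤ z⁻¹ ^ p := by positivity
    rw [Real.norm_eq_abs, abs_of_nonneg (mul_nonneg hgnn hznn)]
    rcases Nat.eq_zero_or_pos p with rfl | hp
    · simp [osa_g0]
    · by_cases hpn : p ≤ n
      · have hchain := osa_Bq_chain n hn p hp hpn
        have hT : (0:ℝ) ≤ Real.sqrt Real.pi * (n:ℝ) ^ ((3:ℝ)/2) / 4 ^ n := by
          have := Real.rpow_nonneg (Nat.cast_nonneg n) ((3:ℝ)/2)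
          positivity
        have hBq : Bq n p ≤ 2 * (p:ℝ) * Bq n 1 / 2 ^ p := by
          rw [le_div_iff₀ (by positivity : (0:ℝ) < 2 ^ p)]
          linarith [hchain]
        have h2 : osaG p n ≤ (2 * (p:ℝ) * Bq n 1 / 2 ^ p)
            * (Real.sqrt Real.pi * (n:ℝ) ^ ((3:ℝ)/2) / 4 ^ n) := by
          unfold osaG
          rw [mul_div_assoc]
          exact mul_le_mul_of_nonneg_right hBq hT
        have h3 : (2 * (p:ℝ) * Bq n 1 / 2 ^ p)
            * (Real.sqrt Real.pi * (n:ℝ) ^ ((3:ℝ)/2) / 4 ^ n)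
            = (2 * (p:ℝ) / 2 ^ p) * osaG 1 n := by
          unfold osaG
          ring
        have h4 : (2 * (p:ℝ) / 2 ^ p) * osaG 1 n ≤ (2 * (p:ℝ) / 2 ^ p) * C :=
          mul_le_mul_of_nonneg_left (hC n hn) (by positivity)
        have h5 : osaG p n ≤ (2 * (p:ℝ) / 2 ^ p) * C := by
          rw [h3] at h2
          linarith
        calc osaG p n * z⁻¹ ^ p ≤ ((2 * (p:ℝ) / 2 ^ p) * C) * z⁻¹ ^ p :=
              mul_le_mul_of_nonneg_right h5 hznn
          _ = 2 * C * ((p:ℝ) * x ^ p) := by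
              rw [hxdef, mul_pow, inv_pow]
              field_simp
              rw [← mul_pow]; norm_num
      · have hB0 : Bq n p = 0 := osa_Bq_zero_left n p (by omega) (by omega)
        unfold osaG
        rw [hB0]
        simp only [zero_mul, zero_div]
        positivity
  have hmain := tendsto_tsum_of_dominated_convergence hsum hpt hbd
  -- identify the partial sums with the tsum
  have hkey : ∀ n : ℕ, Zt n z * (Real.sqrt Real.pi * (n:ℝ) ^ ((3:ℝ)/2)) / 4 ^ n
      = ∑' p : ℕ, osaG p n * z⁻¹ ^ p := by
    intro n
    have hvanish : ∀ p ∉ Finset.range (n + 1), osaG p n * z⁻¹ ^ p = 0 := by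
      intro p hp
      rw [Finset.mem_range, not_lt] at hp
      have hB : Bq n p = 0 := by
        rcases Nat.eq_zero_or_pos n with rfl | hn
        · unfold Bq
          rw [if_pos rfl, if_neg (by omega)]
        · exact osa_Bq_zero_left n p hn (by omega)
      unfold osaG
      rw [hB]
      simp
    rw [tsum_eq_sum hvanish, Zt, Finset.sum_mul, Finset.sum_div]
    exact Finset.sum_congr rfl fun p _ => by unfold osaG; ring
  -- identify the limit value
  have hval : (∑' p : ℕ, (p:ℝ) / 2 ^ (p + 1) * z⁻¹ ^ p) = z / (1 - 2 * z) ^ 2 := by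
    have ha : ∀ p : ℕ, ((p:ℝ) / 2 ^ (p + 1) * z⁻¹ ^ p) = (1/2) * ((p:ℝ) * x ^ p) := by
      intro p
      rw [hxdef, mul_pow, inv_pow, pow_succ]
      rw [inv_pow]
      ring
    rw [tsum_congr ha, tsum_mul_left, tsum_coe_mul_geometric_of_norm_lt_one hxn]
    have hz' : z ≠ 0 := hz0.ne'
    have h2z : (2 * z - 1) ≠ 0 := by intro h; linarith
    have h1x : (1:ℝ) - x ≠ 0 := by intro h; linarith
    rw [hxdef] at h1x ⊢
    have h2zp : (0:ℝ) < 2 * z - 1 := by linarith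
    have hpoly : (1 - z * 4 + z ^ 2 * 4) ≠ 0 := by
      intro h
      nlinarith [mul_pos h2zp h2zp]
    field_simp
    rw [eq_div_iff (by nlinarith)]
    ring
  rw [← hval]
  exact hmain.congr (fun n => (hkey n).symm)
end

section
/- The grand potential per site of the one-transit walk model, ω(z₁,z₂) = -lim_{n→∞} (1/n) log Z_n(z₁,z₂), exists and equals: -log(4z₁z₂) for z₁,z₂ ≥ 1/2; -log z₂ + log(1-z₁) for z₁ < 1/2 and z₂ > z₁; and -log z₁ + log(1-z₂) for z₂ < 1/2 and z₁ > z₂. -/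
open Filter

/-- One-transit walk model partition function Z_n(z₁,z₂). -/
noncomputable def Zfull (n : ℕ) (z₁ z₂ : ℝ) : ℝ :=
  (z₁ * z₂) ^ n * ∑ p ∈ Finset.range (n + 1), Zt p z₁ * Zt (n - p) z₂


section Aux
open Finset Real

lemma Bq_nonneg (m q : ℕ) : 0 ≤ Bq m q := by
  unfold Bq; split_ifs <;> positivity

lemma Zt_zero (z : ℝ) : Zt 0 z = 1 := by simp [Zt, Bq]

lemma Zt_nonneg (m : ℕ) {z : ℝ} (hz : 0 < z) : 0 ≤ Zt m z :=
  Finset.sum_nonneg fun q _ =>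
    mul_nonneg (Bq_nonneg m q) (pow_nonneg (by positivity) q)

lemma Bq_eq {m q : ℕ} (hm : m ≠ 0) (h : q ≤ m) :
    Bq m q = (q : ℝ) * (2 * m - q - 1).factorial / ((m.factorial : ℝ) * (m - q).factorial) := by
  unfold Bq; rw [if_neg hm, if_pos h]

lemma choose_as_factorial {m q : ℕ} (hm : 1 ≤ m) (h : q ≤ m) :
    ((2*m - q).choose m : ℝ) =
      (((2*m - q - 1) + 1 : ℕ) : ℝ) * ((2*m-q-1).factorial : ℝ)
        / ((m.factorial : ℝ) * ((m - q).factorial : ℝ)) := by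
  have hq2m : m ≤ 2*m - q := by omega
  rw [Nat.cast_choose ℝ hq2m]
  have h1 : (2*m - q) - m = m - q := by omega
  have h2 : (2*m - q) = (2*m - q - 1) + 1 := by omega
  rw [h1, h2, Nat.factorial_succ]
  push_cast
  ring


lemma Bq_le_choose {m q : ℕ} (h : q ≤ m) : Bq m q ≤ ((2*m - q).choose m : ℝ) := by
  rcases Nat.eq_zero_or_pos m with rfl | hm
  · interval_cases q; simp [Bq]
  · rw [choose_as_factorial hm h, Bq_eq (by omega) h]
    refine (div_le_div_iff_of_pos_right (by positivity)).mpr ?_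
    have hc : (q:ℝ) ≤ (((2*m - q - 1) + 1 : ℕ) : ℝ) := by
      exact_mod_cast (by omega : q ≤ (2*m - q - 1) + 1)
    have hf : (0:ℝ) ≤ ((2*m-q-1).factorial : ℝ) := by positivity
    nlinarith

lemma Bq_ge_choose {m q : ℕ} (hq : 1 ≤ q) (h : q ≤ m) :
    ((2*m - q).choose m : ℝ) / (2*m) ≤ Bq m q := by
  have hm : 1 ≤ m := le_trans hq h
  rw [choose_as_factorial hm h, Bq_eq (by omega) h, div_div]
  rw [div_le_div_iff₀ (by positivity) (by positivity)]
  have h1 : (((2*m - q - 1) + 1 : ℕ) : ℝ) ≤ 2*(m:ℝ) := by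
    exact_mod_cast (by omega : (2*m - q - 1) + 1 ≤ 2*m)
  have hq1 : (1:ℝ) ≤ (q:ℝ) := by exact_mod_cast hq
  have hf : (0:ℝ) < ((2*m-q-1).factorial : ℝ) := by positivity
  have hMJ : (0:ℝ) < (m.factorial : ℝ) * ((m-q).factorial : ℝ) := by positivity
  have key : (((2*m - q - 1) + 1 : ℕ) : ℝ) * ((2*m-q-1).factorial : ℝ) * ((m.factorial : ℝ) * ((m-q).factorial : ℝ))
      ≤ (q:ℝ) * ((2*m-q-1).factorial : ℝ) * ((m.factorial : ℝ) * ((m-q).factorial : ℝ) * (2*(m:ℝ))) := by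
    have e1 : (q:ℝ) * ((2*m-q-1).factorial : ℝ) * ((m.factorial : ℝ) * ((m-q).factorial : ℝ) * (2*(m:ℝ)))
        = ((q:ℝ) * (2*(m:ℝ))) * (((2*m-q-1).factorial : ℝ) * ((m.factorial : ℝ) * ((m-q).factorial : ℝ))) := by ring
    have e2 : (((2*m - q - 1) + 1 : ℕ) : ℝ) * ((2*m-q-1).factorial : ℝ) * ((m.factorial : ℝ) * ((m-q).factorial : ℝ))
        = (((2*m - q - 1) + 1 : ℕ) : ℝ) * (((2*m-q-1).factorial : ℝ) * ((m.factorial : ℝ) * ((m-q).factorial : ℝ))) := by ring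
    rw [e1, e2]
    apply mul_le_mul_of_nonneg_right ?_ (by positivity)
    nlinarith
  linarith [key]



lemma choose_le_two_pow' (n k : ℕ) : n.choose k ≤ 2 ^ n := by
  rcases le_or_gt k n with h | h
  · calc n.choose k ≤ ∑ i ∈ range (n+1), n.choose i :=
        single_le_sum (f := fun i => n.choose i) (fun i _ => Nat.zero_le _) (mem_range.2 (by omega))
    _ = 2 ^ n := Nat.sum_range_choose n
  · simp [Nat.choose_eq_zero_of_lt h]

lemma binom_term_le {t : ℝ} (ht : 0 ≤ t) {N j : ℕ} (h : j ≤ N) :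
    (N.choose j : ℝ) * t^j ≤ (1+t)^N := by
  calc (N.choose j:ℝ) * t^j = t^j * 1^(N-j) * N.choose j := by ring
  _ ≤ ∑ k ∈ range (N+1), t^k * (1:ℝ)^(N-k) * N.choose k :=
      single_le_sum (f := fun k => t^k * (1:ℝ)^(N-k) * N.choose k)
        (fun i _ => by positivity) (mem_range.2 (by omega))
  _ = (t+1)^N := (add_pow t 1 N).symm
  _ = (1+t)^N := by ring

lemma Zt_le_four {z : ℝ} (hz : 1/2 ≤ z) (m : ℕ) : Zt m z ≤ (m+1) * 4^m := by
  unfold Zt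
  have hmain : ∀ q ∈ range (m+1), Bq m q * z⁻¹ ^ q ≤ 4^m := by
    intro q hq
    rw [mem_range] at hq
    have hqm : q ≤ m := by omega
    have hz0 : (0:ℝ) < z := lt_of_lt_of_le (by norm_num) hz
    have hinv : z⁻¹ ≤ 2 := by
      rw [inv_le_comm₀ hz0 (by norm_num)]
      linarith
    have hinv0 : (0:ℝ) ≤ z⁻¹ := by positivity
    have h1 : Bq m q * z⁻¹ ^ q ≤ ((2:ℝ)^(2*m-q)) * 2^q := by
      apply mul_le_mul ?_ (pow_le_pow_left₀ hinv0 hinv q) (by positivity) (by positivity)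
      calc Bq m q ≤ ((2*m - q).choose m : ℝ) := Bq_le_choose hqm
      _ ≤ ((2:ℕ)^(2*m-q) : ℝ) := by exact_mod_cast choose_le_two_pow' (2*m-q) m
      _ = (2:ℝ)^(2*m-q) := by push_cast; ring
    calc Bq m q * z⁻¹ ^ q ≤ (2:ℝ)^(2*m-q) * 2^q := h1
    _ = (2:ℝ)^(2*m-q+q) := by rw [pow_add]
    _ = (2:ℝ)^(2*m) := by congr 1; omega
    _ = 4^m := by rw [pow_mul]; norm_num
  calc ∑ q ∈ range (m+1), Bq m q * z⁻¹ ^ q ≤ ∑ q ∈ range (m+1), (4:ℝ)^m :=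
      sum_le_sum hmain
  _ = (m+1) * 4^m := by rw [sum_const, card_range]; push_cast; ring

lemma Zt_le_mu {z : ℝ} (hz0 : 0 < z) (hz1 : z < 1) (m : ℕ) :
    Zt m z ≤ (m+1) * ((z*(1-z))⁻¹)^m := by
  unfold Zt
  obtain ⟨t, ht_def⟩ : ∃ t : ℝ, t = z/(1-z) := ⟨_, rfl⟩
  have h1z : (0:ℝ) < 1 - z := by linarith
  have ht : 0 < t := ht_def ▸ div_pos hz0 h1z
  have h1t : 1 + t = (1-z)⁻¹ := by rw [ht_def]; field_simp; ring
  have hzinv : z⁻¹ = (1+t)/t := by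
    rw [h1t, ht_def]; field_simp
  have hmu : (z*(1-z))⁻¹ = (1+t)^2/t := by
    rw [h1t, ht_def]; field_simp
  have hmain : ∀ q ∈ range (m+1), Bq m q * z⁻¹ ^ q ≤ ((z*(1-z))⁻¹)^m := by
    intro q hq
    rw [mem_range] at hq
    have hqm : q ≤ m := by omega
    have key : ((2*m-q).choose m : ℝ) * t^(m-q) ≤ (1+t)^(2*m-q) := by
      have hsymm : (2*m-q).choose (m-q) = (2*m-q).choose m := by
        have h9 : (2*m-q) - m = m - q := by omega
        rw [← h9]
        exact Nat.choose_symm (by omega)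
      rw [← hsymm]
      exact binom_term_le ht.le (by omega)
    have step : ((2*m-q).choose m : ℝ) * ((1+t)/t)^q ≤ (1+t)^(2*m)/t^m := by
      rw [div_pow, mul_div_assoc', div_le_div_iff₀ (by positivity) (by positivity)]
      calc ((2*m-q).choose m : ℝ) * (1+t)^q * t^m
          = (((2*m-q).choose m : ℝ) * t^(m-q)) * ((1+t)^q * t^q) := by
            have hm9 : t^m = t^(m-q) * t^q := by
              rw [← pow_add]; congr 1; omega
            rw [hm9]; ring
      _ ≤ (1+t)^(2*m-q) * ((1+t)^q * t^q) :=
            mul_le_mul_of_nonneg_right key (by positivity)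
      _ = (1+t)^(2*m) * t^q := by
            have hm8 : (1+t)^(2*m-q) * (1+t)^q = (1+t)^(2*m) := by
              rw [← pow_add]; congr 1; omega
            rw [← hm8]; ring
    calc Bq m q * z⁻¹ ^ q ≤ ((2*m-q).choose m : ℝ) * z⁻¹^q :=
          mul_le_mul_of_nonneg_right (Bq_le_choose hqm) (by positivity)
    _ = ((2*m-q).choose m : ℝ) * ((1+t)/t)^q := by rw [hzinv]
    _ ≤ (1+t)^(2*m)/t^m := step
    _ = ((1+t)^2/t)^m := by rw [div_pow, ← pow_mul]
    _ = ((z*(1-z))⁻¹)^m := by rw [hmu]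
  calc ∑ q ∈ range (m+1), Bq m q * z⁻¹ ^ q ≤ ∑ q ∈ range (m+1), ((z*(1-z))⁻¹)^m :=
      sum_le_sum hmain
  _ = (m+1) * ((z*(1-z))⁻¹)^m := by rw [sum_const, card_range]; push_cast; ring


noncomputable def Sg (x : ℝ) (K m : ℕ) : ℝ := ∑ j ∈ range (K+1), ((m+j).choose j : ℝ) * x^j

lemma Sg_zero_right (x : ℝ) (K : ℕ) : Sg x K 0 = ∑ j ∈ range (K+1), x^j := by
  unfold Sg; refine sum_congr rfl fun j _ => ?_; simp

lemma Sg_zero_left (x : ℝ) (m : ℕ) : Sg x 0 m = 1 := by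
  unfold Sg; simp

lemma Sg_rec (x : ℝ) (K m : ℕ) :
    Sg x (K+1) (m+1) = Sg x (K+1) m + x * Sg x K (m+1) := by
  unfold Sg
  rw [Finset.mul_sum]
  rw [sum_range_succ' (fun j => ((m+1+j).choose j : ℝ) * x^j) (K+1)]
  rw [sum_range_succ' (fun j => ((m+j).choose j : ℝ) * x^j) (K+1)]
  simp only [Nat.choose_zero_right, pow_zero, Nat.cast_one, mul_one, add_zero]
  rw [add_right_comm, add_left_inj]
  rw [← sum_add_distrib]
  refine sum_congr rfl fun j _ => ?_
  have h1 : (m+1+(j+1)).choose (j+1) = (m+j+1).choose j + (m+j+1).choose (j+1) := by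
    have e : m+1+(j+1) = (m+j+1)+1 := by omega
    rw [e, Nat.choose_succ_succ']
  have e2 : m+(j+1) = m+j+1 := by omega
  have e3 : m+1+j = m+j+1 := by omega
  rw [h1, e2, e3]
  push_cast
  ring

lemma geom_id {x y : ℝ} (hxy : x + y = 1) (n : ℕ) :
    y * (∑ j ∈ range (n+1), x^j) + x^(n+1) = 1 := by
  induction n with
  | zero => simpa using by linarith
  | succ n ih =>
    rw [sum_range_succ]
    linear_combination ih + x^(n+1) * hxy

lemma Aident {x y : ℝ} (hxy : x + y = 1) (K m : ℕ) :
    y^(m+1) * Sg x K m + x^(K+1) * Sg y m K = 1 := by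
  induction K generalizing m with
  | zero =>
    rw [Sg_zero_left, Sg_zero_right, mul_one]
    linear_combination geom_id (by linarith : y + x = 1) m
  | succ K ihK =>
    induction m with
    | zero =>
      rw [Sg_zero_left, Sg_zero_right, mul_one, pow_one]
      exact geom_id hxy (K+1)
    | succ m ihm =>
      rw [Sg_rec x K m, Sg_rec y m K]
      have h1 := ihm
      have h2 := ihK (m+1)
      linear_combination y * h1 + x * h2 + hxy


lemma Bq_one_lower {m : ℕ} (hm : 1 ≤ m) : (4:ℝ)^m / (8*m^2) ≤ Bq m 1 := by
  have hEq : Bq m 1 = ((2*(m-1)).choose (m-1) : ℝ) / m := by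
    rw [Bq_eq (by omega) hm]
    have e1 : 2*m - 1 - 1 = 2*(m-1) := by omega
    have e2 : (2*(m-1)) - (m-1) = m-1 := by omega
    rw [Nat.cast_choose ℝ (by omega : m-1 ≤ 2*(m-1)), e2, e1]
    have e3 : (m.factorial : ℝ) = m * (m-1).factorial := by
      have : m = (m-1) + 1 := by omega
      rw [this, Nat.factorial_succ]
      push_cast
      ring
    rw [e3]
    have h1 : ((m-1).factorial : ℝ) ≠ 0 := by positivity
    have h2 : (m:ℝ) ≠ 0 := by positivity
    field_simp
    try ring
    try tauto
  rw [hEq]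
  have hC : (4:ℝ)^(m-1) ≤ (2*(m-1)+1 : ℕ) * ((2*(m-1)).choose (m-1) : ℝ) := by
    exact_mod_cast Nat.four_pow_le_two_mul_add_one_mul_central_binom (m-1)
  have hm' : (0:ℝ) < m := by exact_mod_cast hm
  rw [div_le_div_iff₀ (by positivity) hm']
  have e4 : (4:ℝ)^m = 4 * 4^(m-1) := by
    have : m = (m-1)+1 := by omega
    rw [this, pow_succ]
    simp [Nat.add_sub_cancel]
    ring
  have h2m : ((2*(m-1)+1 : ℕ) : ℝ) ≤ 2*m := by
    have : 2*(m-1)+1 ≤ 2*m := by omega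
    exact_mod_cast this
  have hCpos : (0:ℝ) ≤ ((2*(m-1)).choose (m-1) : ℝ) := by positivity
  rw [e4]
  have hm1 : (1:ℝ) ≤ m := by exact_mod_cast hm
  nlinarith [mul_le_mul_of_nonneg_right h2m hCpos]

lemma Zt_ge_term {z : ℝ} (hz : 0 < z) {m : ℕ} (hm : 1 ≤ m) : Bq m 1 * z⁻¹ ≤ Zt m z := by
  have h := single_le_sum (f := fun q => Bq m q * z⁻¹ ^ q)
    (fun i _ => mul_nonneg (Bq_nonneg m i) (by positivity)) (mem_range.2 (by omega : 1 < m + 1))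
  unfold Zt
  simpa using h

lemma Zt_ge_mu {z : ℝ} (hz0 : 0 < z) (hz : z < 1/2) :
    ∃ M : ℕ, ∀ m, M ≤ m → 1 ≤ m → ((z*(1-z))⁻¹)^m / (4*m) ≤ Zt m z := by
  have h1z : (0:ℝ) < 1 - z := by linarith
  -- tail bound
  have hr : |4*z*(1-z)| < 1 := by
    rw [abs_of_pos (by positivity)]
    nlinarith
  have htail0 : Tendsto (fun m : ℕ => ((m:ℝ)+1) * (4*z*(1-z))^m) atTop (nhds 0) := by
    have h1 := tendsto_pow_const_mul_const_pow_of_abs_lt_one 1 hr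
    have h2 := tendsto_pow_atTop_nhds_zero_of_abs_lt_one hr
    have := h1.add h2
    simpa [add_mul] using this
  have hev : ∀ᶠ m : ℕ in atTop, ((m:ℝ)+1) * (4*z*(1-z))^m ≤ 1/2 := by
    filter_upwards [htail0.eventually_le_const (by norm_num : (0:ℝ) < 1/2)] with m hm
    exact hm
  obtain ⟨M, hM⟩ := eventually_atTop.1 hev
  refine ⟨M, fun m hMm hm1 => ?_⟩
  -- tail smallness at m
  have htail : z^m * Sg (1-z) m (m-1) ≤ 1/2 := by
    have hbound : Sg (1-z) m (m-1) ≤ (m+1) * (2:ℝ)^m * (2*(1-z))^m := by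
      unfold Sg
      have : ∀ i ∈ range (m+1), ((m-1+i).choose i : ℝ) * (1-z)^i ≤ (2:ℝ)^m * (2*(1-z))^m := by
        intro i hi
        rw [mem_range] at hi
        have hc : ((m-1+i).choose i : ℝ) ≤ (2:ℝ)^(m-1+i) := by
          calc ((m-1+i).choose i : ℝ) ≤ ((2^(m-1+i) : ℕ) : ℝ) := by
                exact_mod_cast choose_le_two_pow' (m-1+i) i
          _ = (2:ℝ)^(m-1+i) := by push_cast; ring
        have hc2 : (2:ℝ)^(m-1+i) ≤ 2^m * 2^i := by
          rw [← pow_add]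
          apply pow_le_pow_right₀ (by norm_num)
          omega
        have h2z : (1:ℝ) ≤ 2*(1-z) := by linarith
        calc ((m-1+i).choose i : ℝ) * (1-z)^i ≤ (2^m * 2^i) * (1-z)^i := by
              apply mul_le_mul_of_nonneg_right (hc.trans hc2) (by positivity)
        _ = 2^m * (2*(1-z))^i := by rw [mul_pow]; ring
        _ ≤ 2^m * (2*(1-z))^m := by
              apply mul_le_mul_of_nonneg_left (pow_le_pow_right₀ h2z (by omega)) (by positivity)
      calc Sg (1-z) m (m-1) ≤ ∑ i ∈ range (m+1), (2:ℝ)^m * (2*(1-z))^m := sum_le_sum this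
      _ = (m+1) * (2:ℝ)^m * (2*(1-z))^m := by rw [sum_const, card_range]; push_cast; ring
    calc z^m * Sg (1-z) m (m-1) ≤ z^m * ((m+1) * (2:ℝ)^m * (2*(1-z))^m) := by
          apply mul_le_mul_of_nonneg_left hbound (by positivity)
    _ = ((m:ℝ)+1) * (4*z*(1-z))^m := by
          have e : (4*z*(1-z))^m = z^m * (2:ℝ)^m * (2*(1-z))^m := by
            rw [← mul_pow, ← mul_pow]
            congr 1
            ring
          rw [e]
          ring
    _ ≤ 1/2 := hM m hMm
  -- identity gives lower bound on Sg z (m-1) m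
  have hSg : (1/2) * ((1-z)⁻¹)^m ≤ Sg z (m-1) m := by
    have hid := Aident (by ring : z + (1-z) = 1) (m-1) m
    have e5 : (m-1)+1 = m := by omega
    rw [e5] at hid
    have hpow : (1-z)^(m+1) ≤ (1-z)^m := by
      apply pow_le_pow_of_le_one h1z.le (by linarith) (by omega)
    have hSgpos : 0 ≤ Sg z (m-1) m := by
      unfold Sg
      apply sum_nonneg
      intro j _
      positivity
    have h3 : (1-z)^(m+1) * Sg z (m-1) m ≥ 1/2 := by linarith
    rw [ge_iff_le, ← div_le_iff₀' (by positivity : (0:ℝ) < (1-z)^(m+1))] at h3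
    calc (1/2) * ((1-z)⁻¹)^m = (1/2) / (1-z)^m := by rw [inv_pow]; ring
    _ ≤ (1/2) / (1-z)^(m+1) := by
        apply div_le_div_of_nonneg_left (by norm_num) (by positivity) ?_
        calc (1-z)^(m+1) ≤ (1-z)^m := hpow
        _ ≤ (1-z)^m := le_refl _
    _ ≤ Sg z (m-1) m := h3
  -- main chain
  have hmain : (1/(2*m)) * z⁻¹^m * Sg z (m-1) m ≤ Zt m z := by
    unfold Zt
    rw [sum_range_succ' (fun q => Bq m q * z⁻¹ ^ q) m]
    have hB0 : Bq m 0 * z⁻¹ ^ 0 = 0 := by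
      rw [Bq_eq (by omega) (by omega)]
      simp
    rw [hB0, add_zero]
    rw [← Finset.sum_range_reflect (fun i => Bq m (i+1) * z⁻¹ ^ (i+1)) m]
    have e6 : Sg z (m-1) m = ∑ j ∈ range m, ((m+j).choose j : ℝ) * z^j := by
      unfold Sg
      rw [show m - 1 + 1 = m from by omega]
    rw [e6, Finset.mul_sum]
    apply sum_le_sum
    intro j hj
    rw [mem_range] at hj
    have hq1 : 1 ≤ m - j := by omega
    have hq2 : m - j ≤ m := by omega
    have e7 : m - 1 - j + 1 = m - j := by omega
    rw [e7]
    have hchoose : ((2*m - (m-j)).choose m : ℝ) = ((m+j).choose j : ℝ) := by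
      have e8 : 2*m - (m-j) = m + j := by omega
      have e9 : (m+j) - m = j := by omega
      have h10 : (m+j).choose j = (m+j).choose m := by
        have h11 := Nat.choose_symm (Nat.le_add_right m j)
        rwa [e9] at h11
      rw [e8, h10]
    have hBq := Bq_ge_choose hq1 hq2
    rw [hchoose] at hBq
    have hzpow : z⁻¹ ^ (m - j) = z⁻¹^m * z^j := by
      have e9 : z⁻¹^m = z⁻¹^(m-j) * z⁻¹^j := by rw [← pow_add]; congr 1; omega
      rw [e9, mul_assoc, ← mul_pow, inv_mul_cancel₀ hz0.ne', one_pow, mul_one]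
    rw [hzpow]
    calc 1/(2*(m:ℝ)) * z⁻¹ ^ m * (((m + j).choose j : ℝ) * z ^ j)
        = (((m+j).choose j : ℝ) / (2*m)) * (z⁻¹^m * z^j) := by ring
    _ ≤ Bq m (m-j) * (z⁻¹^m * z^j) := by
        apply mul_le_mul_of_nonneg_right hBq (by positivity)
  -- combine
  have hmpos : (0:ℝ) < m := by exact_mod_cast hm1
  have hfin : ((z*(1-z))⁻¹)^m / (4*m) ≤ (1/(2*m)) * z⁻¹^m * ((1/2) * ((1-z)⁻¹)^m) := by
    apply le_of_eq
    rw [mul_inv, mul_pow]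
    field_simp
    ring
  calc ((z*(1-z))⁻¹)^m / (4*m) ≤ (1/(2*m)) * z⁻¹^m * ((1/2) * ((1-z)⁻¹)^m) := hfin
  _ ≤ (1/(2*m)) * z⁻¹^m * Sg z (m-1) m := by
      apply mul_le_mul_of_nonneg_left hSg (by positivity)
  _ ≤ Zt m z := hmain


noncomputable def Sfull (n : ℕ) (z₁ z₂ : ℝ) : ℝ :=
  ∑ p ∈ Finset.range (n + 1), Zt p z₁ * Zt (n - p) z₂

lemma S_lower_left {z₁ z₂ : ℝ} (h1 : 0 < z₁) (h2 : 0 < z₂) (n : ℕ) :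
    Zt n z₁ ≤ Sfull n z₁ z₂ := by
  have h := single_le_sum (f := fun p => Zt p z₁ * Zt (n-p) z₂)
    (fun i _ => mul_nonneg (Zt_nonneg i h1) (Zt_nonneg _ h2)) (mem_range.2 (by omega : n < n + 1))
  simpa [Sfull, Nat.sub_self, Zt_zero] using h

lemma S_lower_right {z₁ z₂ : ℝ} (h1 : 0 < z₁) (h2 : 0 < z₂) (n : ℕ) :
    Zt n z₂ ≤ Sfull n z₁ z₂ := by
  have h := single_le_sum (f := fun p => Zt p z₁ * Zt (n-p) z₂)
    (fun i _ => mul_nonneg (Zt_nonneg i h1) (Zt_nonneg _ h2)) (mem_range.2 (by omega : 0 < n + 1))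
  simpa [Sfull, Zt_zero] using h

lemma S_upper {z₁ z₂ Λ : ℝ} (h1 : 0 < z₁) (h2 : 0 < z₂) (hΛ : 0 < Λ)
    (hU1 : ∀ m, Zt m z₁ ≤ (m+1) * Λ^m) (hU2 : ∀ m, Zt m z₂ ≤ (m+1) * Λ^m) (n : ℕ) :
    Sfull n z₁ z₂ ≤ (n+1)^3 * Λ^n := by
  have hterm : ∀ p ∈ range (n+1), Zt p z₁ * Zt (n-p) z₂ ≤ ((n:ℝ)+1)^2 * Λ^n := by
    intro p hp
    rw [mem_range] at hp
    have hpn : p ≤ n := by omega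
    calc Zt p z₁ * Zt (n-p) z₂ ≤ (((p:ℝ)+1) * Λ^p) * ((((n-p:ℕ):ℝ)+1) * Λ^(n-p)) := by
          apply mul_le_mul (hU1 p) (hU2 (n-p)) (Zt_nonneg _ h2) (by positivity)
    _ = (((p:ℝ)+1) * (((n-p:ℕ):ℝ)+1)) * Λ^(p + (n-p)) := by rw [pow_add]; ring
    _ = (((p:ℝ)+1) * (((n-p:ℕ):ℝ)+1)) * Λ^n := by rw [show p + (n-p) = n from by omega]
    _ ≤ (((n:ℝ)+1) * ((n:ℝ)+1)) * Λ^n := by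
          apply mul_le_mul_of_nonneg_right ?_ (by positivity)
          have c1 : ((p:ℝ)+1) ≤ (n:ℝ)+1 := by
            have : (p:ℝ) ≤ n := by exact_mod_cast hpn
            linarith
          have c2 : (((n-p:ℕ):ℝ)+1) ≤ (n:ℝ)+1 := by
            have : ((n-p:ℕ):ℝ) ≤ n := by exact_mod_cast Nat.sub_le n p
            linarith
          have c3 : (0:ℝ) ≤ (p:ℝ)+1 := by positivity
          nlinarith
    _ = ((n:ℝ)+1)^2 * Λ^n := by ring
  calc Sfull n z₁ z₂ ≤ ∑ p ∈ range (n+1), ((n:ℝ)+1)^2 * Λ^n := sum_le_sum hterm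
  _ = ((n:ℝ)+1)^3 * Λ^n := by rw [sum_const, card_range]; push_cast; ring
  _ = ((n:ℕ)+1 : ℝ)^3 * Λ^n := by norm_num

lemma glue {z₁ z₂ Λ c : ℝ} (h1 : 0 < z₁) (h2 : 0 < z₂) (hΛ : 1 < Λ) (hc : 0 < c) (M : ℕ)
    (hl : ∀ n : ℕ, M ≤ n → 1 ≤ n → c * Λ^n / n^2 ≤ Sfull n z₁ z₂)
    (hu : ∀ n : ℕ, Sfull n z₁ z₂ ≤ (n+1)^3 * Λ^n) :
    Tendsto (fun n : ℕ => -(1/(n:ℝ)) * Real.log (Zfull n z₁ z₂)) atTop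
      (nhds (-(Real.log (z₁*z₂)) - Real.log Λ)) := by
  have hΛ0 : (0:ℝ) < Λ := by linarith
  -- auxiliary limits
  have hlogn : Tendsto (fun n : ℕ => Real.log n / n) atTop (nhds 0) :=
    (Real.isLittleO_log_id_atTop.tendsto_div_nhds_zero).comp tendsto_natCast_atTop_atTop
  have hlogn1 : Tendsto (fun n : ℕ => Real.log (n+1) / n) atTop (nhds 0) := by
    have ha : Tendsto (fun n : ℕ => Real.log (n+1) / (n+1)) atTop (nhds 0) := by
      have := (Real.isLittleO_log_id_atTop.tendsto_div_nhds_zero).comp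
        (tendsto_atTop_add_const_right atTop (1:ℝ) tendsto_natCast_atTop_atTop)
      exact this
    have hb : Tendsto (fun n : ℕ => ((n:ℝ)+1) / n) atTop (nhds 1) := by
      have h1' : Tendsto (fun n : ℕ => 1 + 1/(n:ℝ)) atTop (nhds (1 + 0)) :=
        tendsto_const_nhds.add tendsto_one_div_atTop_nhds_zero_nat
      apply Tendsto.congr' ?_ (by simpa using h1')
      filter_upwards [eventually_ge_atTop 1] with n hn
      have hn0 : (n:ℝ) ≠ 0 := by positivity
      field_simp
    have hab := ha.mul hb
    apply Tendsto.congr' ?_ (by simpa using hab)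
    filter_upwards [eventually_ge_atTop 1] with n hn
    have hn0 : ((n:ℝ)+1) ≠ 0 := by positivity
    field_simp
  have hconst : Tendsto (fun n : ℕ => Real.log c / n) atTop (nhds 0) := by
    simpa using tendsto_one_div_atTop_nhds_zero_nat.const_mul (Real.log c) |>.congr
      (fun n => by ring)
  -- squeeze for (1/n) log S_n
  have hS : Tendsto (fun n : ℕ => (1/(n:ℝ)) * Real.log (Sfull n z₁ z₂)) atTop
      (nhds (Real.log Λ)) := by
    have hg : Tendsto (fun n : ℕ => Real.log Λ + (Real.log c / n - 2 * (Real.log n / n)))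
        atTop (nhds (Real.log Λ)) := by
      have : Tendsto (fun n : ℕ => Real.log c / n - 2 * (Real.log n / n)) atTop (nhds 0) := by
        have := hconst.sub ((hlogn.const_mul 2))
        simpa using this
      simpa using tendsto_const_nhds.add this
    have hh : Tendsto (fun n : ℕ => Real.log Λ + 3 * (Real.log (n+1) / n)) atTop
        (nhds (Real.log Λ)) := by
      have := hlogn1.const_mul 3
      simpa using tendsto_const_nhds.add this
    apply tendsto_of_tendsto_of_tendsto_of_le_of_le' hg hh
    · filter_upwards [eventually_ge_atTop (max M 1)] with n hn
      have hM' : M ≤ n := le_trans (le_max_left _ _) hn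
      have h1' : 1 ≤ n := le_trans (le_max_right _ _) hn
      have hn0 : (0:ℝ) < n := by exact_mod_cast h1'
      have hlow := hl n hM' h1'
      have hSpos : 0 < Sfull n z₁ z₂ := lt_of_lt_of_le (by positivity) hlow
      have hloglow : Real.log (c * Λ^n / n^2) ≤ Real.log (Sfull n z₁ z₂) :=
        Real.log_le_log (by positivity) hlow
      have hlogeq : Real.log (c * Λ^n / n^2) = Real.log c + n * Real.log Λ - 2 * Real.log n := by
        rw [Real.log_div (by positivity) (by positivity), Real.log_mul (by positivity) (by positivity),
          Real.log_pow, Real.log_pow]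
        push_cast
        ring
      rw [hlogeq] at hloglow
      have hn0' : (n:ℝ) ≠ 0 := ne_of_gt hn0
      calc Real.log Λ + (Real.log c / n - 2 * (Real.log n / n))
          = (Real.log c + n * Real.log Λ - 2 * Real.log n) / n := by field_simp; ring
      _ ≤ Real.log (Sfull n z₁ z₂) / n := (div_le_div_iff_of_pos_right hn0).mpr hloglow
      _ = 1/(n:ℝ) * Real.log (Sfull n z₁ z₂) := by ring
    · filter_upwards [eventually_ge_atTop (max M 1)] with n hn
      have hM' : M ≤ n := le_trans (le_max_left _ _) hn
      have h1' : 1 ≤ n := le_trans (le_max_right _ _) hn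
      have hn0 : (0:ℝ) < n := by exact_mod_cast h1'
      have hSpos : 0 < Sfull n z₁ z₂ := lt_of_lt_of_le (by positivity) (hl n hM' h1')
      have hupp := hu n
      have hlogup : Real.log (Sfull n z₁ z₂) ≤ Real.log (((n:ℝ)+1)^3 * Λ^n) :=
        Real.log_le_log hSpos hupp
      have hlogeq : Real.log (((n:ℝ)+1)^3 * Λ^n) = 3 * Real.log ((n:ℝ)+1) + n * Real.log Λ := by
        rw [Real.log_mul (by positivity) (by positivity), Real.log_pow, Real.log_pow]
        push_cast
        ring
      rw [hlogeq] at hlogup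
      calc 1/(n:ℝ) * Real.log (Sfull n z₁ z₂)
          = Real.log (Sfull n z₁ z₂) / n := by ring
      _ ≤ (3 * Real.log ((n:ℝ)+1) + n * Real.log Λ) / n := (div_le_div_iff_of_pos_right hn0).mpr hlogup
      _ = Real.log Λ + 3 * (Real.log ((n:ℝ)+1) / n) := by field_simp; ring
  -- conclude
  have hfinal := (tendsto_const_nhds (x := -(Real.log (z₁*z₂))) (f := atTop)).sub hS
  apply Tendsto.congr' ?_ hfinal
  filter_upwards [eventually_ge_atTop (max M 1)] with n hn
  have hM' : M ≤ n := le_trans (le_max_left _ _) hn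
  have h1' : 1 ≤ n := le_trans (le_max_right _ _) hn
  have hn0 : (0:ℝ) < n := by exact_mod_cast h1'
  have hSpos : 0 < Sfull n z₁ z₂ := lt_of_lt_of_le (by positivity) (hl n hM' h1')
  have hZeq : Zfull n z₁ z₂ = (z₁*z₂)^n * Sfull n z₁ z₂ := rfl
  rw [hZeq, Real.log_mul (by positivity) (ne_of_gt hSpos), Real.log_pow]
  have hn0' : (n:ℝ) ≠ 0 := ne_of_gt hn0
  field_simp
  ring



lemma four_le_mu {z : ℝ} (hz0 : 0 < z) (hz1 : z < 1) : (4:ℝ) ≤ (z*(1-z))⁻¹ := by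
  rw [le_inv_comm₀ (by norm_num) (by nlinarith)]
  nlinarith [sq_nonneg (2*z - 1)]

lemma mu_mono {z₁ z₂ : ℝ} (h1 : 0 < z₁) (h12 : z₁ < z₂) (h2 : z₂ < 1/2) :
    (z₂*(1-z₂))⁻¹ ≤ (z₁*(1-z₁))⁻¹ := by
  have hp1 : (0:ℝ) < z₁*(1-z₁) := by nlinarith
  have hle : z₁*(1-z₁) ≤ z₂*(1-z₂) := by nlinarith
  exact inv_anti₀ hp1 hle


end Aux

/-- The grand potential per site ω = -lim (1/n) log Zₙ exists and takes its
piecewise value in the three regions of the phase diagram. -/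
theorem grand_potential (z₁ z₂ : ℝ) (h1 : 0 < z₁) (h2 : 0 < z₂) :
    (1 / 2 ≤ z₁ → 1 / 2 ≤ z₂ →
      Tendsto (fun n : ℕ => -(1 / (n : ℝ)) * Real.log (Zfull n z₁ z₂)) atTop
        (nhds (-Real.log (4 * z₁ * z₂)))) ∧
    (z₁ < 1 / 2 → z₁ < z₂ →
      Tendsto (fun n : ℕ => -(1 / (n : ℝ)) * Real.log (Zfull n z₁ z₂)) atTop
        (nhds (-Real.log z₂ + Real.log (1 - z₁)))) ∧
    (z₂ < 1 / 2 → z₂ < z₁ →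
      Tendsto (fun n : ℕ => -(1 / (n : ℝ)) * Real.log (Zfull n z₁ z₂)) atTop
        (nhds (-Real.log z₁ + Real.log (1 - z₂)))) := by
  refine ⟨?_, ?_, ?_⟩
  · -- region 1
    intro hz1 hz2
    have htarget : -(Real.log (z₁*z₂)) - Real.log 4 = -Real.log (4 * z₁ * z₂) := by
      rw [show (4:ℝ)*z₁*z₂ = 4*(z₁*z₂) from by ring,
        Real.log_mul (by norm_num) (ne_of_gt (mul_pos h1 h2)),
        Real.log_mul (ne_of_gt h1) (ne_of_gt h2)]
      ring
    rw [← htarget]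
    apply glue h1 h2 (by norm_num : (1:ℝ) < 4) (show (0:ℝ) < z₁⁻¹/8 by positivity) 1
    · intro n hn _
      calc z₁⁻¹/8 * 4^n / n^2 = (4^n / (8*(n:ℝ)^2)) * z₁⁻¹ := by ring
      _ ≤ Bq n 1 * z₁⁻¹ := by
          apply mul_le_mul_of_nonneg_right (Bq_one_lower hn) (by positivity)
      _ ≤ Zt n z₁ := Zt_ge_term h1 hn
      _ ≤ Sfull n z₁ z₂ := S_lower_left h1 h2 n
    · exact S_upper h1 h2 (by norm_num) (Zt_le_four hz1) (Zt_le_four hz2)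
  · -- region 2
    intro hz1 hz12
    have hz1' : z₁ < 1 := by linarith
    have hmu4 : (4:ℝ) ≤ (z₁*(1-z₁))⁻¹ := four_le_mu h1 hz1'
    have hmupos : (0:ℝ) < (z₁*(1-z₁))⁻¹ := by
      have : (0:ℝ) < z₁*(1-z₁) := by nlinarith
      positivity
    have htarget : -(Real.log (z₁*z₂)) - Real.log ((z₁*(1-z₁))⁻¹)
        = -Real.log z₂ + Real.log (1 - z₁) := by
      rw [Real.log_inv, Real.log_mul (ne_of_gt h1) (ne_of_gt h2),
        Real.log_mul (ne_of_gt h1) (by nlinarith : (1-z₁) ≠ 0)]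
      ring
    rw [← htarget]
    obtain ⟨M, hM⟩ := Zt_ge_mu h1 hz1
    apply glue h1 h2 (by linarith : (1:ℝ) < (z₁*(1-z₁))⁻¹)
      (show (0:ℝ) < 1/4 by norm_num) (max M 1)
    · intro n hn hn1
      have hMn : M ≤ n := le_trans (le_max_left _ _) hn
      have hn0 : (0:ℝ) < n := by exact_mod_cast hn1
      calc (1/4) * ((z₁*(1-z₁))⁻¹)^n / n^2 ≤ ((z₁*(1-z₁))⁻¹)^n / (4*n) := by
            rw [div_le_div_iff₀ (by positivity) (by positivity)]
            have hn' : (1:ℝ) ≤ n := by exact_mod_cast hn1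
            have hpow : (0:ℝ) ≤ ((z₁*(1-z₁))⁻¹)^n := by positivity
            have h9 : (n:ℝ) ≤ (n:ℝ)^2 := by nlinarith
            nlinarith [mul_le_mul_of_nonneg_right h9 hpow]
      _ ≤ Zt n z₁ := hM n hMn hn1
      _ ≤ Sfull n z₁ z₂ := S_lower_left h1 h2 n
    · apply S_upper h1 h2 hmupos (Zt_le_mu h1 hz1')
      intro m
      rcases le_or_gt (1/2) z₂ with hcase | hcase
      · calc Zt m z₂ ≤ (m+1) * 4^m := Zt_le_four hcase m
        _ ≤ (m+1) * ((z₁*(1-z₁))⁻¹)^m := by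
            apply mul_le_mul_of_nonneg_left (pow_le_pow_left₀ (by norm_num) hmu4 m) (by positivity)
      · have hz2' : z₂ < 1 := by linarith
        calc Zt m z₂ ≤ (m+1) * ((z₂*(1-z₂))⁻¹)^m := Zt_le_mu h2 hz2' m
        _ ≤ (m+1) * ((z₁*(1-z₁))⁻¹)^m := by
            apply mul_le_mul_of_nonneg_left ?_ (by positivity)
            apply pow_le_pow_left₀ ?_ (mu_mono h1 hz12 hcase) m
            have : (0:ℝ) < z₂*(1-z₂) := by nlinarith
            positivity
  · -- region 3 (symmetric)
    intro hz2 hz21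
    have hz2' : z₂ < 1 := by linarith
    have hmu4 : (4:ℝ) ≤ (z₂*(1-z₂))⁻¹ := four_le_mu h2 hz2'
    have hmupos : (0:ℝ) < (z₂*(1-z₂))⁻¹ := by
      have : (0:ℝ) < z₂*(1-z₂) := by nlinarith
      positivity
    have htarget : -(Real.log (z₁*z₂)) - Real.log ((z₂*(1-z₂))⁻¹)
        = -Real.log z₁ + Real.log (1 - z₂) := by
      rw [Real.log_inv, Real.log_mul (ne_of_gt h1) (ne_of_gt h2),
        Real.log_mul (ne_of_gt h2) (by nlinarith : (1-z₂) ≠ 0)]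
      ring
    rw [← htarget]
    obtain ⟨M, hM⟩ := Zt_ge_mu h2 hz2
    apply glue h1 h2 (by linarith : (1:ℝ) < (z₂*(1-z₂))⁻¹)
      (show (0:ℝ) < 1/4 by norm_num) (max M 1)
    · intro n hn hn1
      have hMn : M ≤ n := le_trans (le_max_left _ _) hn
      have hn0 : (0:ℝ) < n := by exact_mod_cast hn1
      calc (1/4) * ((z₂*(1-z₂))⁻¹)^n / n^2 ≤ ((z₂*(1-z₂))⁻¹)^n / (4*n) := by
            rw [div_le_div_iff₀ (by positivity) (by positivity)]
            have hn' : (1:ℝ) ≤ n := by exact_mod_cast hn1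
            have hpow : (0:ℝ) ≤ ((z₂*(1-z₂))⁻¹)^n := by positivity
            have h9 : (n:ℝ) ≤ (n:ℝ)^2 := by nlinarith
            nlinarith [mul_le_mul_of_nonneg_right h9 hpow]
      _ ≤ Zt n z₂ := hM n hMn hn1
      _ ≤ Sfull n z₁ z₂ := S_lower_right h1 h2 n
    · refine S_upper h1 h2 hmupos ?_ (Zt_le_mu h2 hz2')
      intro m
      rcases le_or_gt (1/2) z₁ with hcase | hcase
      · calc Zt m z₁ ≤ (m+1) * 4^m := Zt_le_four hcase m
        _ ≤ (m+1) * ((z₂*(1-z₂))⁻¹)^m := by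
            apply mul_le_mul_of_nonneg_left (pow_le_pow_left₀ (by norm_num) hmu4 m) (by positivity)
      · have hz1'' : z₁ < 1 := by linarith
        calc Zt m z₁ ≤ (m+1) * ((z₁*(1-z₁))⁻¹)^m := Zt_le_mu h1 hz1'' m
        _ ≤ (m+1) * ((z₂*(1-z₂))⁻¹)^m := by
            apply mul_le_mul_of_nonneg_left ?_ (by positivity)
            apply pow_le_pow_left₀ ?_ (mu_mono h2 hz21 hcase) m
            have : (0:ℝ) < z₁*(1-z₁) := by nlinarith
            positivity
end

section
/- For the TASEP with matrix-product stationary state, the normalisation Z̃_n = ⟨W|(D+E)^n|V⟩ with the DEHP algebra relations equals ∑_{p=0}^n B_{n,p} ∑_{q=0}^p α^{-q} β^{-(p-q)}, where B_{n,p} are Ballot numbers. -/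
namespace DEHPaux

lemma Bq_self (n : ℕ) : Bq n n = 1 := by
  unfold Bq
  rcases n with _ | n
  · simp
  · have h1 : 2 * (n+1) - (n+1) - 1 = n := by omega
    have h2 : (n+1) - (n+1) = 0 := by omega
    simp only [Nat.succ_ne_zero, if_false, le_refl, if_true, h1, h2]
    rw [Nat.factorial_succ, Nat.factorial_zero]
    have : (n.factorial : ℝ) ≠ 0 := Nat.cast_ne_zero.2 n.factorial_ne_zero
    push_cast
    field_simp

lemma Bq_zero_right (n : ℕ) (h : n ≠ 0) : Bq n 0 = 0 := by
  unfold Bq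
  simp [h]

lemma fact_recursion (a b : ℕ) :
    Bq (a+b+2) (b+1) = Bq (a+b+2) (b+2) + Bq (a+b+1) b := by
  unfold Bq
  have e1 : 2 * (a+b+2) - (b+1) - 1 = 2*a+b+2 := by omega
  have e2 : (a+b+2) - (b+1) = a+1 := by omega
  have e3 : 2 * (a+b+2) - (b+2) - 1 = 2*a+b+1 := by omega
  have e4 : (a+b+2) - (b+2) = a := by omega
  have e5 : 2 * (a+b+1) - b - 1 = 2*a+b+1 := by omega
  have e6 : (a+b+1) - b = a+1 := by omega
  simp only [show a+b+2 ≠ 0 by omega, show a+b+1 ≠ 0 by omega, if_false,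
    show b+1 ≤ a+b+2 by omega, show b+2 ≤ a+b+2 by omega, show b ≤ a+b+1 by omega,
    if_true, e1, e2, e3, e4, e5, e6]
  have f1 : ((2*a+b+2).factorial : ℝ) = (2*a+b+2) * (2*a+b+1).factorial := by
    rw [show 2*a+b+2 = (2*a+b+1)+1 by omega, Nat.factorial_succ]; push_cast; ring
  have f2 : ((a+b+2).factorial : ℝ) = (a+b+2) * (a+b+1).factorial := by
    rw [show a+b+2 = (a+b+1)+1 by omega, Nat.factorial_succ]; push_cast; ring
  have f3 : ((a+1).factorial : ℝ) = (a+1) * a.factorial := by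
    rw [Nat.factorial_succ]; push_cast; ring
  have n1 : ((2*a+b+1).factorial : ℝ) ≠ 0 := Nat.cast_ne_zero.2 (Nat.factorial_ne_zero _)
  have n2 : ((a+b+1).factorial : ℝ) ≠ 0 := Nat.cast_ne_zero.2 (Nat.factorial_ne_zero _)
  have n3 : (a.factorial : ℝ) ≠ 0 := Nat.cast_ne_zero.2 (Nat.factorial_ne_zero _)
  rw [f1, f2, f3]
  push_cast
  field_simp
  ring

lemma Bq_sum_rec (n k : ℕ) (hk : k ≤ n) :
    Bq (n+1) (n+1-k) = Bq n (n-k) + ∑ p ∈ Finset.Icc (n+1-k) n, Bq n p := by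
  induction k with
  | zero =>
    simp only [Nat.sub_zero]
    rw [show Finset.Icc (n+1) n = ∅ by rw [Finset.Icc_eq_empty]; omega]
    simp [Bq_self]
  | succ k ih =>
    have hk' : k ≤ n := by omega
    have h3 := fact_recursion (k) (n-k-1)
    have ea : k + (n-k-1) + 2 = n+1 := by omega
    have eb : (n-k-1) + 1 = n - k := by omega
    have ec : (n-k-1) + 2 = n+1-k := by omega
    rw [ea, eb, ec, show k + (n-k-1) + 1 = n by omega] at h3
    have ed : n+1-(k+1) = n-k := by omega
    rw [ed, h3, ih hk']
    have : Finset.Icc (n-k) n = insert (n-k) (Finset.Icc (n+1-k) n) := by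
      ext x; simp only [Finset.mem_Icc, Finset.mem_insert]; omega
    rw [this, Finset.sum_insert (by simp [Finset.mem_Icc]; omega)]
    have : n - (k+1) = n-k-1 := by omega
    rw [this]
    ring

lemma Bq_rec' (n t : ℕ) (h2 : t ≤ n) :
    Bq (n+1) (t+1) = Bq n t + ∑ p ∈ Finset.Icc (t+1) n, Bq n p := by
  have := Bq_sum_rec n (n-t) (by omega)
  rw [show n+1-(n-t) = t+1 by omega, show n-(n-t) = t by omega] at this
  exact this

noncomputable def Nop {R : Type*} [Ring R] (D E : R) (p : ℕ) : R :=
  ∑ q ∈ Finset.range (p+1), E^q * D^(p-q)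

lemma DmE {R : Type*} [Ring R] (D E : R) (hDE : D * E = D + E) (m : ℕ) :
    D^m * E = E + ∑ j ∈ Finset.range m, D^(j+1) := by
  induction m with
  | zero => simp
  | succ m ih =>
    rw [pow_succ', mul_assoc, ih, mul_add, hDE, Finset.mul_sum]
    rw [Finset.sum_range_succ' (fun j => D^(j+1))]
    have : ∀ j, D * D^(j+1) = D^(j+1+1) := fun j => by rw [← pow_succ']
    simp only [this, zero_add, pow_one]
    abel

lemma swap_sum {M : Type*} [AddCommMonoid M] (f : ℕ → ℕ → M) (p : ℕ) :
    ∑ q ∈ Finset.range (p+1), ∑ j ∈ Finset.range (p-q), f q j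
      = ∑ s ∈ Finset.range p, ∑ q ∈ Finset.range (s+1), f q (s-q) := by
  induction p with
  | zero => simp
  | succ p ih =>
    rw [Finset.sum_range_succ (fun q => ∑ j ∈ Finset.range (p+1-q), f q j)]
    rw [show p+1-(p+1) = 0 by omega]
    simp only [Finset.range_zero, Finset.sum_empty, add_zero]
    have step : ∀ q ∈ Finset.range (p+1),
        ∑ j ∈ Finset.range (p+1-q), f q j
          = ∑ j ∈ Finset.range (p-q), f q j + f q (p-q) := by
      intro q hq
      rw [Finset.mem_range] at hq
      rw [show p+1-q = (p-q)+1 by omega, Finset.sum_range_succ]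
    rw [Finset.sum_congr rfl step, Finset.sum_add_distrib, ih,
      Finset.sum_range_succ (fun s => ∑ q ∈ Finset.range (s+1), f q (s-q))]

lemma double_swap {M : Type*} [AddCommMonoid M] (g : ℕ → ℕ → M) (n : ℕ) :
    ∑ p ∈ Finset.range (n+1), ∑ s ∈ Finset.range p, g p s
      = ∑ s ∈ Finset.range n, ∑ p ∈ Finset.Icc (s+1) n, g p s := by
  induction n with
  | zero => simp
  | succ n ih =>
    rw [Finset.sum_range_succ (fun p => ∑ s ∈ Finset.range p, g p s), ih,
      Finset.sum_range_succ (fun s => ∑ p ∈ Finset.Icc (s+1) (n+1), g p s)]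
    rw [Finset.Icc_self, Finset.sum_singleton]
    have step : ∀ s ∈ Finset.range n,
        ∑ p ∈ Finset.Icc (s+1) (n+1), g p s
          = ∑ p ∈ Finset.Icc (s+1) n, g p s + g (n+1) s := by
      intro s hs
      rw [Finset.mem_range] at hs
      exact Finset.sum_Icc_succ_top (by omega) _
    rw [Finset.sum_congr rfl step, Finset.sum_add_distrib,
      Finset.sum_range_succ (fun s => g (n+1) s)]
    abel

lemma NC {R : Type*} [Ring R] (D E : R) (hDE : D * E = D + E) (p : ℕ) :
    Nop D E p * (D + E) = Nop D E (p+1) + ∑ s ∈ Finset.range p, Nop D E (s+1) := by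
  unfold Nop
  rw [Finset.sum_mul]
  have term : ∀ q ∈ Finset.range (p+1),
      (E^q * D^(p-q)) * (D + E)
        = E^q * D^(p+1-q) + (E^(q+1) + ∑ j ∈ Finset.range (p-q), E^q * D^(j+1)) := by
    intro q hq
    rw [Finset.mem_range] at hq
    rw [mul_add, mul_assoc (E^q) (D^(p-q)) D, ← pow_succ D (p-q),
      show p-q+1 = p+1-q by omega, mul_assoc (E^q) (D^(p-q)) E, DmE D E hDE,
      mul_add, Finset.mul_sum, ← pow_succ E q]
  rw [Finset.sum_congr rfl term, Finset.sum_add_distrib, Finset.sum_add_distrib]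
  have h1 : ∑ q ∈ Finset.range (p+1+1), E^q * D^(p+1-q)
      = ∑ q ∈ Finset.range (p+1), E^q * D^(p+1-q) + E^(p+1) := by
    rw [Finset.sum_range_succ, show p+1-(p+1) = 0 by omega, pow_zero, mul_one]
  have h2 : ∑ q ∈ Finset.range (p+1), E^(q+1)
      = ∑ q ∈ Finset.range p, E^(q+1) + E^(p+1) := Finset.sum_range_succ _ _
  have h3 : ∑ q ∈ Finset.range (p+1), ∑ j ∈ Finset.range (p-q), E^q * D^(j+1)
      = ∑ s ∈ Finset.range p, ∑ q ∈ Finset.range (s+1), E^q * D^(s+1-q) := by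
    rw [swap_sum (fun q j => E^q * D^(j+1)) p]
    refine Finset.sum_congr rfl fun s _ => Finset.sum_congr rfl fun q hq => ?_
    rw [Finset.mem_range] at hq
    rw [show s-q+1 = s+1-q by omega]
  have h4 : ∀ s, ∑ q ∈ Finset.range (s+1+1), E^q * D^(s+1-q)
      = ∑ q ∈ Finset.range (s+1), E^q * D^(s+1-q) + E^(s+1) := by
    intro s
    rw [Finset.sum_range_succ, show s+1-(s+1) = 0 by omega, pow_zero, mul_one]
  rw [h1, h2, h3]
  rw [Finset.sum_congr rfl (fun s _ => h4 s), Finset.sum_add_distrib]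
  abel

lemma Cpow {R : Type*} [Ring R] [Algebra ℝ R] (D E : R) (hDE : D * E = D + E) (n : ℕ) :
    (D+E)^n = ∑ p ∈ Finset.range (n+1), Bq n p • Nop D E p := by
  induction n with
  | zero => simp [Nop, Bq]
  | succ n ih =>
    rw [pow_succ, ih, Finset.sum_mul]
    have t1 : ∀ p ∈ Finset.range (n+1), (Bq n p • Nop D E p) * (D+E)
        = Bq n p • Nop D E (p+1) + ∑ s ∈ Finset.range p, Bq n p • Nop D E (s+1) := by
      intro p _
      rw [smul_mul_assoc, NC D E hDE, smul_add, Finset.smul_sum]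
    rw [Finset.sum_congr rfl t1, Finset.sum_add_distrib]
    rw [double_swap (fun p s => Bq n p • Nop D E (s+1)) n]
    rw [Finset.sum_range_succ' (fun p => Bq (n+1) p • Nop D E p) (n+1)]
    rw [Bq_zero_right (n+1) (by omega), zero_smul, add_zero]
    have ext : ∑ s ∈ Finset.range n, ∑ p ∈ Finset.Icc (s+1) n, Bq n p • Nop D E (s+1)
        = ∑ s ∈ Finset.range (n+1), (∑ p ∈ Finset.Icc (s+1) n, Bq n p) • Nop D E (s+1) := by
      rw [Finset.sum_range_succ]
      rw [show Finset.Icc (n+1) n = ∅ from Finset.Icc_eq_empty (by omega)]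
      simp [Finset.sum_smul]
    rw [ext, ← Finset.sum_add_distrib]
    refine Finset.sum_congr rfl fun t ht => ?_
    rw [Finset.mem_range] at ht
    rw [Bq_rec' n t (by omega), add_smul]

end DEHPaux

/-- The TASEP normalisation ⟨W|(D+E)ⁿ|V⟩, computed from the DEHP algebra relations,
equals ∑_p B_{n,p} ∑_{q=0}^p α^{-q} β^{-(p-q)}. -/
theorem dehp_normalisation (V : Type*) [AddCommGroup V] [Module ℝ V]
    (D E : Module.End ℝ V) (v : V) (w : V →ₗ[ℝ] ℝ) (α β : ℝ)
    (hα : 0 < α) (hβ : 0 < β)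
    (hDE : D * E = D + E)
    (hDV : D v = β⁻¹ • v)
    (hWE : ∀ u : V, w (E u) = α⁻¹ * w u)
    (hWV : w v = 1) (n : ℕ) :
    w (((D + E) ^ n) v) =
      ∑ p ∈ Finset.range (n + 1), Bq n p *
        ∑ q ∈ Finset.range (p + 1), α⁻¹ ^ q * β⁻¹ ^ (p - q) := by
  have hDpow : ∀ m : ℕ, (D^m) v = β⁻¹^m • v := by
    intro m
    induction m with
    | zero => simp
    | succ m ih =>
      rw [pow_succ, Module.End.mul_apply, hDV, map_smul, ih, pow_succ, smul_smul,
        mul_comm]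
  have hWpow : ∀ (m : ℕ) (u : V), w ((E^m) u) = α⁻¹^m * w u := by
    intro m
    induction m with
    | zero => simp
    | succ m ih =>
      intro u
      rw [pow_succ', Module.End.mul_apply, hWE, ih, pow_succ', mul_assoc]
  have key : ∀ p : ℕ, w ((DEHPaux.Nop D E p) v)
      = ∑ q ∈ Finset.range (p+1), α⁻¹ ^ q * β⁻¹ ^ (p - q) := by
    intro p
    unfold DEHPaux.Nop
    rw [LinearMap.sum_apply, map_sum]
    refine Finset.sum_congr rfl fun q _ => ?_
    rw [Module.End.mul_apply, hDpow, map_smul, map_smul, smul_eq_mul, hWpow, hWV,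
      mul_one, mul_comm]
  rw [DEHPaux.Cpow D E hDE n, LinearMap.sum_apply, map_sum]
  refine Finset.sum_congr rfl fun p _ => ?_
  rw [LinearMap.smul_apply, map_smul, smul_eq_mul, key]
end
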